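/- arXiv:math/0305082 — 3 statements merged into one kernel-verified Lean document; each statement's English description precedes it below -/
import Mathlib

section
/- In the space X: let (y_i) be a normalized block basis of (e_i) which has a spreading model (ỹ_i), and suppose N ∈ ℕ satisfies 0.99 ≤ ‖(1/(2N))(ỹ_1 + ⋯ + ỹ_{2N})‖. Then there exist k ∈ ℕ and a subsequence (x_i) of (y_i) such that for all j_1 < j_2 < ... < j_N one has 0.96 < Σ_{i=1}^{k} 3^{-i} ‖[k,∞)((1/N) Σ_{s=1}^{N} x_{j_s})‖_i. -/
open scoped BigOperators ENNReal NNReal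
open Filter

noncomputable section

/-- Restriction of a finitely supported vector to a set of coordinates. -/
def restrF (S : Set ℕ) (x : ℕ →₀ ℝ) : ℕ →₀ ℝ :=
  haveI := Classical.decPred (· ∈ S)
  x.filter (· ∈ S)

/-- The sup norm `‖x‖_∞` of a finitely supported vector. -/
def supF (x : ℕ →₀ ℝ) : ℝ := ⨆ i, |x i|

/-- The norm `‖x‖_i = sup_{E_1 < ⋯ < E_{n_i}} ∑_j ν(E_j x)`. -/
def normI (ν : (ℕ →₀ ℝ) → ℝ) (nseq : ℕ → ℕ) (i : ℕ) (x : ℕ →₀ ℝ) : ℝ :=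
  sSup {r | ∃ E : ℕ → Finset ℕ,
    (∀ j, j < nseq i → (E j).Nonempty) ∧
    (∀ j j', j < j' → j' < nseq i → ∀ e ∈ E j, ∀ e' ∈ E j', e < e') ∧
    r = ∑ j ∈ Finset.range (nseq i), ν (restrF (E j) x)}

/-- The set of admissible sums `∑_{i=1}^k 3^{-i} ∑_{j=1}^{n_i} ν(E^i_j x)` appearing in the
implicit equation defining the norm of `X`, where `k ≤ E^i_1 < E^i_2 < ⋯ < E^i_{n_i}`. -/
def normSetA (ν : (ℕ →₀ ℝ) → ℝ) (nseq : ℕ → ℕ) (x : ℕ →₀ ℝ) : Set ℝ :=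
  {r | ∃ k : ℕ, 0 < k ∧ ∃ E : ℕ → ℕ → Finset ℕ,
    (∀ i, 1 ≤ i → i ≤ k → ∀ j, j < nseq i → (E i j).Nonempty) ∧
    (∀ i, 1 ≤ i → i ≤ k → ∀ j, j < nseq i → ∀ e ∈ E i j, k ≤ e) ∧
    (∀ i, 1 ≤ i → i ≤ k → ∀ j j', j < j' → j' < nseq i →
      ∀ e ∈ E i j, ∀ e' ∈ E i j', e < e') ∧
    r = ∑ i ∈ Finset.Icc 1 k, ((1 : ℝ) / 3) ^ i *
          ∑ j ∈ Finset.range (nseq i), ν (restrF (E i j) x)}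

/-- `ν` is a norm on `c₀₀`. -/
def IsNormC00 (ν : (ℕ →₀ ℝ) → ℝ) : Prop :=
  (∀ x, 0 ≤ ν x) ∧ (∀ x, ν x = 0 → x = 0) ∧
  (∀ (a : ℝ) (x), ν (a • x) = |a| * ν x) ∧ (∀ x y, ν (x + y) ≤ ν x + ν y)

/-- The defining hypotheses on the sequence `(n_i)` and the norm `ν` of the space `X`
of Section 2: `(n_i)` is increasing, and
`(n_1+⋯+n_k)^{-1/p} ∑_{i≤k} n_i/3^i → ∞` for every `p > 1`; `ν` satisfies the
implicit Tsirelson-type equation. -/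
def IsSectionTwoSpace (nseq : ℕ → ℕ) (ν : (ℕ →₀ ℝ) → ℝ) : Prop :=
  StrictMono nseq ∧ (∀ i, 0 < nseq i) ∧
  (∀ p : ℝ, 1 < p →
    Tendsto (fun k => (∑ i ∈ Finset.Icc 1 k, (nseq i : ℝ)) ^ (-(1 / p)) *
      ∑ i ∈ Finset.Icc 1 k, (nseq i : ℝ) / 3 ^ i) atTop atTop) ∧
  IsNormC00 ν ∧
  (∀ x, ν x = max (supF x) (sSup (normSetA ν nseq x)))

/-- `y` is a block basis of the unit vector basis of `c₀₀`. -/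
def IsBlockSeqF (y : ℕ → (ℕ →₀ ℝ)) : Prop :=
  (∀ i, y i ≠ 0) ∧ ∀ i, ∀ a ∈ (y i).support, ∀ b ∈ (y (i + 1)).support, a < b

/-- `xt` (a basic sequence in the Banach space `Y`) is a spreading model of the
sequence `x` of `c₀₀` endowed with the norm `ν`. -/
def IsSpreadingModelNu {Y : Type*} [NormedAddCommGroup Y] [NormedSpace ℝ Y]
    (ν : (ℕ →₀ ℝ) → ℝ) (x : ℕ → (ℕ →₀ ℝ)) (xt : ℕ → Y) : Prop :=
  ((∀ i, xt i ≠ 0) ∧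
    ∃ K : ℝ, 1 ≤ K ∧ ∀ (a : ℕ → ℝ) (m n : ℕ), m ≤ n →
      ‖∑ i ∈ Finset.range m, a i • xt i‖ ≤ K * ‖∑ i ∈ Finset.range n, a i • xt i‖) ∧
  ∃ ε : ℕ → ℝ, (∀ n, 0 < ε n) ∧ Antitone ε ∧ Tendsto ε atTop (nhds 0) ∧
    ∀ (n : ℕ) (a : Fin n → ℝ), (∀ i, |a i| ≤ 1) →
      ∀ k : Fin n → ℕ, StrictMono k → (∀ i, n ≤ k i) →
        |ν (∑ i, a i • x (k i)) - ‖∑ i, a i • xt (i : ℕ)‖| < ε n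


/-! ### Auxiliary lemmas -/

section auxrestr

variable {S : Set ℕ} {x : ℕ →₀ ℝ} {t : ℕ}

lemma restrF_apply_mem (h : t ∈ S) (x : ℕ →₀ ℝ) : restrF S x t = x t := by
  classical
  rw [restrF]; exact Finsupp.filter_apply_pos _ x h

lemma restrF_apply_not_mem (h : t ∉ S) (x : ℕ →₀ ℝ) : restrF S x t = 0 := by
  classical
  rw [restrF]; exact Finsupp.filter_apply_neg _ x h

lemma restrF_add (S : Set ℕ) (x y : ℕ →₀ ℝ) :
    restrF S (x + y) = restrF S x + restrF S y := by
  classical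
  ext t
  by_cases h : t ∈ S <;>
    simp [restrF_apply_mem, restrF_apply_not_mem, h]

lemma restrF_smul (S : Set ℕ) (c : ℝ) (x : ℕ →₀ ℝ) :
    restrF S (c • x) = c • restrF S x := by
  classical
  ext t
  by_cases h : t ∈ S <;>
    simp [restrF_apply_mem, restrF_apply_not_mem, h]

lemma restrF_eq_self (h : ∀ t ∈ x.support, t ∈ S) :
    restrF S x = x := by
  ext t
  by_cases ht : t ∈ S
  · exact restrF_apply_mem ht x
  · rw [restrF_apply_not_mem ht x]
    by_contra hne
    exact ht (h t (Finsupp.mem_support_iff.mpr fun h0 => hne h0.symm))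

lemma restrF_eq_zero (h : ∀ t ∈ x.support, t ∉ S) :
    restrF S x = 0 := by
  ext t
  by_cases ht : t ∈ S
  · rw [restrF_apply_mem ht x]
    by_contra h0
    exact h t (Finsupp.mem_support_iff.mpr h0) ht
  · rw [restrF_apply_not_mem ht x]; rfl

lemma support_restrF (S : Set ℕ) (x : ℕ →₀ ℝ) :
    (restrF S x).support ⊆ x.support := by
  intro t ht
  rw [Finsupp.mem_support_iff] at ht ⊢
  intro h0
  apply ht
  by_cases h : t ∈ S
  · rw [restrF_apply_mem h, h0]
  · exact restrF_apply_not_mem h x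

lemma mem_of_restrF_support (ht : t ∈ (restrF S x).support) : t ∈ S := by
  by_contra h
  rw [Finsupp.mem_support_iff] at ht
  exact ht (restrF_apply_not_mem h x)

end auxrestr

section auxsupF

lemma abs_le_supF (x : ℕ →₀ ℝ) (t : ℕ) : |x t| ≤ supF x := by
  have hb : BddAbove (Set.range fun t => |x t|) := by
    refine ⟨∑ s ∈ x.support, |x s|, ?_⟩
    rintro _ ⟨t, rfl⟩
    by_cases ht : t ∈ x.support
    · exact Finset.single_le_sum (fun s _ => abs_nonneg (x s)) ht
    · rw [Finsupp.notMem_support_iff] at ht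
      simp only [ht, abs_zero]
      exact Finset.sum_nonneg fun s _ => abs_nonneg (x s)
  exact le_ciSup hb t

lemma supF_le {x : ℕ →₀ ℝ} {c : ℝ} (h : ∀ t, |x t| ≤ c) : supF x ≤ c :=
  ciSup_le h

end auxsupF

section auxnu

variable {ν : (ℕ →₀ ℝ) → ℝ} (hν : IsNormC00 ν)
include hν

lemma nu_zero : ν 0 = 0 := by
  have := hν.2.2.1 0 0
  simpa using this

lemma nu_sum_le (s : Finset ℕ) (f : ℕ → (ℕ →₀ ℝ)) :
    ν (∑ i ∈ s, f i) ≤ ∑ i ∈ s, ν (f i) := by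
  classical
  induction s using Finset.cons_induction with
  | empty => simp [nu_zero hν]
  | cons a s ha ih =>
    rw [Finset.sum_cons, Finset.sum_cons]
    exact (hν.2.2.2 _ _).trans (by linarith)

end auxnu

/-- An a-priori bound for `ν` of any coordinate restriction of `x`. -/
def Cbound (ν : (ℕ →₀ ℝ) → ℝ) (x : ℕ →₀ ℝ) : ℝ :=
  ∑ t ∈ x.support, |x t| * ν (Finsupp.single t 1)

section auxnu2

variable {ν : (ℕ →₀ ℝ) → ℝ} (hν : IsNormC00 ν)
include hν

lemma Cbound_nonneg (x : ℕ →₀ ℝ) : 0 ≤ Cbound ν x :=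
  Finset.sum_nonneg fun t _ => mul_nonneg (abs_nonneg _) (hν.1 _)

lemma nu_restr_le (S : Set ℕ) (x : ℕ →₀ ℝ) : ν (restrF S x) ≤ Cbound ν x := by
  classical
  set w := restrF S x with hw
  have hsum : w = ∑ t ∈ w.support, Finsupp.single t (w t) := by
    conv_lhs => rw [← Finsupp.sum_single w]
    rfl
  calc ν w = ν (∑ t ∈ w.support, Finsupp.single t (w t)) := by rw [← hsum]
    _ ≤ ∑ t ∈ w.support, ν (Finsupp.single t (w t)) := nu_sum_le hν _ _
    _ = ∑ t ∈ w.support, |w t| * ν (Finsupp.single t 1) := by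
        refine Finset.sum_congr rfl fun t _ => ?_
        rw [show Finsupp.single t (w t) = (w t) • Finsupp.single t (1:ℝ) by
          rw [Finsupp.smul_single', mul_one], hν.2.2.1]
    _ = ∑ t ∈ w.support, |x t| * ν (Finsupp.single t 1) := by
        refine Finset.sum_congr rfl fun t ht => ?_
        rw [hw, restrF_apply_mem (mem_of_restrF_support ht)]
    _ ≤ Cbound ν x := by
        refine Finset.sum_le_sum_of_subset_of_nonneg (support_restrF S x) fun t _ _ =>
          mul_nonneg (abs_nonneg _) (hν.1 _)

lemma levelSum_le (x : ℕ →₀ ℝ) (E : ℕ → Finset ℕ) (n : ℕ)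
    (hinc : ∀ j j', j < j' → j' < n → ∀ e ∈ E j, ∀ e' ∈ E j', e < e') :
    ∑ j ∈ Finset.range n, ν (restrF (E j) x) ≤ (x.support.card : ℝ) * Cbound ν x := by
  classical
  set T := (Finset.range n).filter (fun j => ((E j) ∩ x.support).Nonempty) with hT
  have hzero : ∀ j ∈ Finset.range n, j ∉ T → ν (restrF (E j) x) = 0 := by
    intro j hj hjT
    have hempty : ¬ ((E j) ∩ x.support).Nonempty := by
      intro hne
      exact hjT (Finset.mem_filter.mpr ⟨hj, hne⟩)
    have : restrF (E j) x = 0 := by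
      apply restrF_eq_zero
      intro t ht hts
      exact hempty ⟨t, Finset.mem_inter.mpr ⟨hts, ht⟩⟩
    rw [this, nu_zero hν]
  have hTsub : T ⊆ Finset.range n := Finset.filter_subset _ _
  rw [← Finset.sum_subset hTsub hzero]
  have hcard : T.card ≤ x.support.card := by
    have hmapsto : ∀ j ∈ T, (if h : ((E j) ∩ x.support).Nonempty
        then ((E j) ∩ x.support).min' h else 0) ∈ x.support := by
      intro j hj
      have hne := (Finset.mem_filter.mp hj).2
      rw [dif_pos hne]
      exact Finset.mem_inter.mp (Finset.min'_mem _ hne) |>.2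
    refine Finset.card_le_card_of_injOn _ hmapsto ?_
    intro j hj j' hj' heq
    by_contra hne
    have hnej := (Finset.mem_filter.mp hj).2
    have hnej' := (Finset.mem_filter.mp hj').2
    simp only [dif_pos hnej, dif_pos hnej'] at heq
    have h1 : ((E j) ∩ x.support).min' hnej ∈ E j :=
      (Finset.mem_inter.mp (Finset.min'_mem _ hnej)).1
    have h2 : ((E j') ∩ x.support).min' hnej' ∈ E j' :=
      (Finset.mem_inter.mp (Finset.min'_mem _ hnej')).1
    rcases lt_or_gt_of_ne hne with h | h
    · have := hinc j j' h (Finset.mem_range.mp (Finset.mem_filter.mp hj').1) _ h1 _ h2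
      omega
    · have := hinc j' j h (Finset.mem_range.mp (Finset.mem_filter.mp hj).1) _ h2 _ h1
      omega
  calc ∑ j ∈ T, ν (restrF (E j) x) ≤ ∑ _j ∈ T, Cbound ν x :=
        Finset.sum_le_sum fun j _ => nu_restr_le hν _ x
    _ = (T.card : ℝ) * Cbound ν x := by rw [Finset.sum_const, nsmul_eq_mul]
    _ ≤ (x.support.card : ℝ) * Cbound ν x := by
        apply mul_le_mul_of_nonneg_right _ (Cbound_nonneg hν x)
        exact_mod_cast hcard

omit hν in
lemma sum_third_le (k : ℕ) :
    ∑ i ∈ Finset.Icc 1 k, ((1:ℝ)/3) ^ i ≤ 1/2 - (1/2) * (1/3 : ℝ)^k := by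
  induction k with
  | zero => simp
  | succ k ih =>
    rw [Finset.sum_Icc_succ_top (by omega)]
    have : ((1:ℝ)/3)^(k+1) = (1/3) * (1/3)^k := by ring
    rw [this]
    nlinarith [pow_nonneg (by norm_num : (0:ℝ) ≤ 1/3) k]

omit hν in
lemma sum_third_le_one (k : ℕ) :
    ∑ i ∈ Finset.Icc 1 k, ((1:ℝ)/3) ^ i ≤ 1 := by
  have := sum_third_le k
  nlinarith [pow_nonneg (by norm_num : (0:ℝ) ≤ 1/3) k]

lemma bddAbove_normSetA (nseq : ℕ → ℕ) (x : ℕ →₀ ℝ) :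
    BddAbove (normSetA ν nseq x) := by
  refine ⟨(x.support.card : ℝ) * Cbound ν x, ?_⟩
  rintro r ⟨k, hk, E, hne, hge, hinc, rfl⟩
  have hCC : 0 ≤ (x.support.card : ℝ) * Cbound ν x :=
    mul_nonneg (Nat.cast_nonneg _) (Cbound_nonneg hν x)
  calc ∑ i ∈ Finset.Icc 1 k, ((1:ℝ)/3)^i * ∑ j ∈ Finset.range (nseq i), ν (restrF (E i j) x)
      ≤ ∑ i ∈ Finset.Icc 1 k, ((1:ℝ)/3)^i * ((x.support.card : ℝ) * Cbound ν x) := by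
        refine Finset.sum_le_sum fun i hi => ?_
        rw [Finset.mem_Icc] at hi
        exact mul_le_mul_of_nonneg_left
          (levelSum_le hν x (E i) (nseq i) (hinc i hi.1 hi.2))
          (pow_nonneg (by norm_num) i)
    _ = (∑ i ∈ Finset.Icc 1 k, ((1:ℝ)/3)^i) * ((x.support.card : ℝ) * Cbound ν x) := by
        rw [Finset.sum_mul]
    _ ≤ 1 * ((x.support.card : ℝ) * Cbound ν x) :=
        mul_le_mul_of_nonneg_right (sum_third_le_one k) hCC
    _ = (x.support.card : ℝ) * Cbound ν x := one_mul _

lemma bddAbove_normISet (nseq : ℕ → ℕ) (i : ℕ) (x : ℕ →₀ ℝ) :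
    BddAbove {r | ∃ E : ℕ → Finset ℕ,
      (∀ j, j < nseq i → (E j).Nonempty) ∧
      (∀ j j', j < j' → j' < nseq i → ∀ e ∈ E j, ∀ e' ∈ E j', e < e') ∧
      r = ∑ j ∈ Finset.range (nseq i), ν (restrF (E j) x)} := by
  refine ⟨(x.support.card : ℝ) * Cbound ν x, ?_⟩
  rintro r ⟨E, hne, hinc, rfl⟩
  exact levelSum_le hν x E (nseq i) hinc

lemma le_normI {nseq : ℕ → ℕ} {i : ℕ} {x : ℕ →₀ ℝ} {E : ℕ → Finset ℕ}
    (hne : ∀ j, j < nseq i → (E j).Nonempty)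
    (hinc : ∀ j j', j < j' → j' < nseq i → ∀ e ∈ E j, ∀ e' ∈ E j', e < e') :
    ∑ j ∈ Finset.range (nseq i), ν (restrF (E j) x) ≤ normI ν nseq i x :=
  le_csSup (bddAbove_normISet hν nseq i x) ⟨E, hne, hinc, rfl⟩

lemma normI_nonneg (nseq : ℕ → ℕ) (i : ℕ) (x : ℕ →₀ ℝ) :
    0 ≤ normI ν nseq i x := by
  have h1 : ∀ j, j < nseq i → ((fun j => ({j} : Finset ℕ)) j).Nonempty :=
    fun j _ => ⟨j, by simp⟩
  have h2 : ∀ j j', j < j' → j' < nseq i → ∀ e ∈ (fun j => ({j} : Finset ℕ)) j,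
      ∀ e' ∈ (fun j => ({j} : Finset ℕ)) j', e < e' := by
    intro j j' h _ e he e' he'
    simp only [Finset.mem_singleton] at he he'
    omega
  have h := le_normI hν (nseq := nseq) (i := i) (x := x) h1 h2
  exact le_trans (Finset.sum_nonneg fun j _ => hν.1 _) h

end auxnu2

lemma blocks_lt {y : ℕ → ℕ →₀ ℝ} (hblock : IsBlockSeqF y) :
    ∀ {i i' : ℕ}, i < i' → ∀ a ∈ (y i).support, ∀ b ∈ (y i').support, a < b := by
  intro i i'
  induction i' with
  | zero => omega
  | succ k ih =>
    intro h a ha b hb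
    rcases Nat.lt_or_ge i k with h' | h'
    · obtain ⟨c, hc⟩ := Finsupp.support_nonempty_iff.mpr (hblock.1 k)
      exact lt_trans (ih h' a ha c hc) (hblock.2 k c hc b hb)
    · have hik : i = k := by omega
      subst hik
      exact hblock.2 i a ha b hb

set_option maxHeartbeats 3000000 in
/-- **Lemma 2.4.** In the space `X`: if `(y_i)` is a normalized block basis of `(e_i)`
with spreading model `(ỹ_i)` and `N ∈ ℕ` satisfies
`0.99 ≤ ‖(1/(2N))(ỹ_1 + ⋯ + ỹ_{2N})‖`, then there are `k ∈ ℕ` and a subsequence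
`(x_i) = (y_{φ(i)})` such that for all `j_1 < ⋯ < j_N`,
`0.96 < ∑_{i=1}^k 3^{-i} ‖[k,∞)((1/N) ∑_{s=1}^N x_{j_s})‖_i`. -/
theorem statement3 {Y : Type*} [NormedAddCommGroup Y] [NormedSpace ℝ Y]
    (nseq : ℕ → ℕ) (ν : (ℕ →₀ ℝ) → ℝ)
    (hX : IsSectionTwoSpace nseq ν)
    (y : ℕ → ℕ →₀ ℝ) (hblock : IsBlockSeqF y) (hnorm : ∀ i, ν (y i) = 1)
    (yt : ℕ → Y) (hsm : IsSpreadingModelNu ν y yt)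
    (N : ℕ) (hN : 0 < N)
    (h99 : (0.99 : ℝ) ≤ ‖(1 / (2 * (N : ℝ))) • ∑ i ∈ Finset.range (2 * N), yt i‖) :
    ∃ k : ℕ, 0 < k ∧ ∃ φ : ℕ → ℕ, StrictMono φ ∧
      ∀ j : Fin N → ℕ, StrictMono j →
        (0.96 : ℝ) < ∑ i ∈ Finset.Icc 1 k, ((1 : ℝ) / 3) ^ i *
          normI ν nseq i (restrF (Set.Ici k) ((N : ℝ)⁻¹ • ∑ s : Fin N, y (φ (j s)))) := by
  classical
  obtain ⟨hν, hEq⟩ : IsNormC00 ν ∧ ∀ x, ν x = max (supF x) (sSup (normSetA ν nseq x)) :=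
    ⟨hX.2.2.2.1, hX.2.2.2.2⟩
  obtain ⟨-, ε, hεpos, hεanti, hεlim, hεapx⟩ := hsm
  -- choose `n` with small spreading error
  have hev : ∀ᶠ nn in atTop, ε nn < 1/1000 :=
    hεlim.eventually (gt_mem_nhds (by norm_num))
  obtain ⟨n, hn2N, hεn⟩ := ((eventually_ge_atTop (2*N)).and hev).exists
  -- the number of "anchor" blocks
  set m := N / 20 + 1 with hm
  have hm1 : 1 ≤ m := by omega
  have hmN : m ≤ N := by omega
  have hm24 : 24 * N < 1000 * m := by omega
  have hN0 : (0:ℝ) < N := by exact_mod_cast hN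
  have hN1 : (1:ℝ) ≤ N := by exact_mod_cast hN
  have hysupp : ∀ i, (y i).support.Nonempty :=
    fun i => Finsupp.support_nonempty_iff.mpr (hblock.1 i)
  have hsupF_le_nu : ∀ x, supF x ≤ ν x :=
    fun x => (le_max_left _ _).trans (le_of_eq (hEq x).symm)
  -- the uniform level bound
  set kb := (y (n + m - 1)).support.max' (hysupp _) with hkb
  refine ⟨kb + 1, Nat.succ_pos _, fun i => n + m + i, fun a b hab => Nat.add_lt_add_left hab (n+m), ?_⟩
  intro j hjmono
  show (0.96:ℝ) < ∑ i ∈ Finset.Icc 1 (kb+1), ((1:ℝ)/3)^i *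
    normI ν nseq i (restrF (Set.Ici (kb+1)) ((N:ℝ)⁻¹ • ∑ s : Fin N, y (n + m + j s)))
  -- the extension of `j` to all of ℕ
  set jext : ℕ → ℕ :=
    fun s => if h : s < N then j ⟨s, h⟩ else j ⟨N - 1, by omega⟩ + (s - N) + 1 with hjext
  have hjext_mono : StrictMono jext := by
    apply strictMono_nat_of_lt_succ
    intro s
    by_cases h1 : s + 1 < N
    · rw [hjext]
      simp only
      rw [dif_pos (by omega : s < N), dif_pos h1]
      exact hjmono (show (⟨s, by omega⟩ : Fin N) < ⟨s+1, h1⟩ from by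
        rw [Fin.mk_lt_mk]; omega)
    · by_cases h2 : s < N
      · rw [hjext]
        simp only
        rw [dif_pos h2, dif_neg (by omega)]
        have hle : (⟨s, h2⟩ : Fin N) ≤ ⟨N - 1, by omega⟩ := by
          rw [Fin.mk_le_mk]; omega
        have := hjmono.monotone hle
        omega
      · rw [hjext]
        simp only
        rw [dif_neg h2, dif_neg (by omega)]
        omega
  have hjext_eq : ∀ s : Fin N, jext s = j s := by
    intro s
    rw [hjext]
    simp only
    rw [dif_pos s.isLt]
  -- the index selection for the `2N` blocks
  set idx : ℕ → ℕ := fun t => if t < m then n + t else n + m + jext (t - m) with hidx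
  have hidx_mono : StrictMono idx := by
    apply strictMono_nat_of_lt_succ
    intro t
    rw [hidx]
    simp only
    by_cases h1 : t + 1 < m
    · rw [if_pos (by omega), if_pos h1]; omega
    · by_cases h2 : t < m
      · rw [if_pos h2, if_neg h1]; omega
      · rw [if_neg h2, if_neg h1]
        have := hjext_mono (show t - m < t + 1 - m by omega)
        omega
  have hidx_ge : ∀ t, n ≤ idx t := by
    intro t
    rw [hidx]
    simp only
    split <;> omega
  -- the vectors
  set Comp := ∑ t ∈ Finset.range m, y (idx t) with hComp
  set A := ∑ s ∈ Finset.range N, y (idx (m + s)) with hA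
  set T := ∑ t ∈ Finset.range (N - m), y (idx (m + (N + t))) with hT
  have hsplit : ∑ t ∈ Finset.range (2*N), y (idx t) = Comp + (A + T) := by
    have h2N : 2*N = m + (N + (N - m)) := by omega
    rw [h2N, Finset.sum_range_add,
      Finset.sum_range_add (fun i => y (idx (m + i))) N (N - m)]
  -- the spreading-model estimate
  have habs : ∀ i : Fin n, |(if (i:ℕ) < 2*N then 1/(2*(N:ℝ)) else 0)| ≤ 1 := by
    intro i
    split
    · rw [abs_of_pos (by positivity)]
      rw [div_le_one (by positivity)]
      linarith
    · simp
  have hκmono : StrictMono (fun i : Fin n => idx (i:ℕ)) := by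
    intro p q hpq
    exact hidx_mono hpq
  have hκge : ∀ i : Fin n, n ≤ idx (i:ℕ) := fun i => hidx_ge _
  have happx := hεapx n (fun i => if (i:ℕ) < 2*N then 1/(2*(N:ℝ)) else 0) habs
    (fun i : Fin n => idx (i:ℕ)) hκmono hκge
  have hvec : (∑ i : Fin n, (if (i:ℕ) < 2*N then 1/(2*(N:ℝ)) else 0) • y (idx (i:ℕ)))
      = (1/(2*(N:ℝ))) • (Comp + (A + T)) := by
    rw [Fin.sum_univ_eq_sum_range (fun i => (if i < 2*N then 1/(2*(N:ℝ)) else 0) • y (idx i)) n]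
    rw [← Finset.sum_subset (Finset.range_subset_range.mpr hn2N) (fun i _ hi => by
      rw [if_neg (by simpa using hi), zero_smul])]
    rw [← hsplit, Finset.smul_sum]
    refine Finset.sum_congr rfl fun i hi => ?_
    rw [if_pos (Finset.mem_range.mp hi)]
  have hwvec : (∑ i : Fin n, (if (i:ℕ) < 2*N then 1/(2*(N:ℝ)) else 0) • yt (i:ℕ))
      = (1/(2*(N:ℝ))) • ∑ i ∈ Finset.range (2*N), yt i := by
    rw [Fin.sum_univ_eq_sum_range (fun i => (if i < 2*N then 1/(2*(N:ℝ)) else 0) • yt i) n]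
    rw [← Finset.sum_subset (Finset.range_subset_range.mpr hn2N) (fun i _ hi => by
      rw [if_neg (by simpa using hi), zero_smul])]
    rw [Finset.smul_sum]
    refine Finset.sum_congr rfl fun i hi => ?_
    rw [if_pos (Finset.mem_range.mp hi)]
  set Z := (1/(2*(N:ℝ))) • (Comp + (A + T)) with hZ
  have hZν : (0.989:ℝ) < ν Z := by
    rw [hvec, hwvec] at happx
    have h1 := abs_lt.mp happx
    have h2 := h1.1
    linarith
  -- the sup-norm of Z is small
  have hsupFZ : supF Z ≤ 1/2 := by
    apply supF_le
    intro t
    have hZt : Z t = (1/(2*(N:ℝ))) * (∑ i ∈ Finset.range (2*N), y (idx i)) t := by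
      rw [hZ, ← hsplit, Finsupp.smul_apply, smul_eq_mul]
    have hsum1 : |(∑ i ∈ Finset.range (2*N), y (idx i)) t| ≤ 1 := by
      rw [Finsupp.finset_sum_apply]
      by_cases hex : ∃ i ∈ Finset.range (2*N), (y (idx i)) t ≠ 0
      · obtain ⟨i0, hi0mem, hi0⟩ := hex
        rw [Finset.sum_eq_single_of_mem i0 hi0mem (fun i hi hne => by
          by_contra h0
          have ht1 : t ∈ (y (idx i)).support := Finsupp.mem_support_iff.mpr h0
          have ht2 : t ∈ (y (idx i0)).support := Finsupp.mem_support_iff.mpr hi0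
          rcases lt_or_gt_of_ne hne with h | h
          · exact absurd (blocks_lt hblock (hidx_mono h) t ht1 t ht2) (lt_irrefl t)
          · exact absurd (blocks_lt hblock (hidx_mono h) t ht2 t ht1) (lt_irrefl t))]
        calc |y (idx i0) t| ≤ supF (y (idx i0)) := abs_le_supF _ t
          _ ≤ ν (y (idx i0)) := hsupF_le_nu _
          _ = 1 := hnorm _
      · push_neg at hex
        rw [Finset.sum_eq_zero hex]
        norm_num
    rw [hZt, abs_mul]
    have h12 : |1/(2*(N:ℝ))| = 1/(2*(N:ℝ)) := abs_of_pos (by positivity)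
    rw [h12]
    have : 1/(2*(N:ℝ)) ≤ 1/2 := by
      rw [div_le_div_iff₀ (by positivity) (by norm_num)]
      linarith
    nlinarith [abs_nonneg ((∑ i ∈ Finset.range (2*N), y (idx i)) t), this]
  -- hence the norming set is responsible
  have hsSupZ : (0.989:ℝ) < sSup (normSetA ν nseq Z) := by
    have h' : ν Z ≤ supF Z ∨ ν Z ≤ sSup (normSetA ν nseq Z) := le_max_iff.mp (le_of_eq (hEq Z))
    rcases h' with h' | h'
    · linarith
    · linarith
  have hnsne : (normSetA ν nseq Z).Nonempty := by
    by_contra hcon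
    rw [Set.not_nonempty_iff_eq_empty] at hcon
    rw [hcon, Real.sSup_empty] at hsSupZ
    linarith
  obtain ⟨r, hrmem, hr988⟩ := exists_lt_of_lt_csSup hnsne
    (show (0.988:ℝ) < sSup (normSetA ν nseq Z) by linarith)
  obtain ⟨kz, hkz, E, hEne, hEge, hEinc, hrEq⟩ := hrmem
  -- supports of the anchor blocks lie below kb
  have hanchor : ∀ t' ∈ Comp.support, t' ≤ kb := by
    intro t' ht'
    obtain ⟨tt, htt, ht'mem⟩ := Finset.mem_biUnion.mp (Finsupp.support_finset_sum ht')
    have httm : tt < m := Finset.mem_range.mp htt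
    have hidxtt : idx tt = n + tt := by
      rw [hidx]; simp only; rw [if_pos httm]
    rcases Nat.lt_or_ge (idx tt) (n + m - 1) with hlt | hge'
    · have := blocks_lt hblock hlt t' ht'mem kb (Finset.max'_mem _ _)
      omega
    · have heq : idx tt = n + m - 1 := by omega
      rw [heq] at ht'mem
      exact Finset.le_max' _ _ ht'mem
  -- claim: the level of the witness is at most kb
  have hkzle : kz ≤ kb := by
    by_contra hgt
    push_neg at hgt
    set Z₂ := (1/(2*(N:ℝ))) • (A + T) with hZ₂
    have hrestrEq : ∀ i ∈ Finset.Icc 1 kz, ∀ jj ∈ Finset.range (nseq i),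
        restrF (E i jj) Z = restrF (E i jj) Z₂ := by
      intro i hi jj hjj
      rw [Finset.mem_Icc] at hi
      ext t'
      by_cases ht' : t' ∈ (E i jj : Set ℕ)
      · rw [restrF_apply_mem ht', restrF_apply_mem ht']
        have hkzt : kz ≤ t' := hEge i hi.1 hi.2 jj (Finset.mem_range.mp hjj) t' ht'
        have hCt : Comp t' = 0 := by
          by_contra h0
          have := hanchor t' (Finsupp.mem_support_iff.mpr h0)
          omega
        rw [hZ, hZ₂]
        simp only [Finsupp.smul_apply, Finsupp.add_apply, hCt]
        ring
      · rw [restrF_apply_not_mem ht', restrF_apply_not_mem ht']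
    have hrA : r ∈ normSetA ν nseq Z₂ := by
      refine ⟨kz, hkz, E, hEne, hEge, hEinc, ?_⟩
      rw [hrEq]
      refine Finset.sum_congr rfl fun i hi => ?_
      congr 1
      exact Finset.sum_congr rfl fun jj hjj => by rw [hrestrEq i hi jj hjj]
    have hr_le : r ≤ ν Z₂ :=
      le_trans (le_csSup (bddAbove_normSetA hν nseq Z₂) hrA)
        ((le_max_right _ _).trans (le_of_eq (hEq Z₂).symm))
    have hνZ₂ : ν Z₂ ≤ (1/(2*(N:ℝ))) * ((N:ℝ) + ((N - m : ℕ):ℝ)) := by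
      rw [hZ₂, hν.2.2.1]
      have hAT : ν (A + T) ≤ (N:ℝ) + ((N - m : ℕ):ℝ) := by
        refine (hν.2.2.2 A T).trans ?_
        have hA1 : ν A ≤ (N:ℝ) := by
          refine (nu_sum_le hν _ _).trans ?_
          rw [show ∑ s ∈ Finset.range N, ν (y (idx (m + s))) = ∑ s ∈ Finset.range N, (1:ℝ) from
            Finset.sum_congr rfl fun s _ => hnorm _]
          simp
        have hT1 : ν T ≤ ((N - m : ℕ):ℝ) := by
          refine (nu_sum_le hν _ _).trans ?_
          rw [show ∑ t ∈ Finset.range (N-m), ν (y (idx (m + (N + t))))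
              = ∑ t ∈ Finset.range (N-m), (1:ℝ) from
            Finset.sum_congr rfl fun s _ => hnorm _]
          simp
        linarith
      have h12 : |1/(2*(N:ℝ))| = 1/(2*(N:ℝ)) := abs_of_pos (by positivity)
      rw [h12]
      exact mul_le_mul_of_nonneg_left hAT (by positivity)
    have hmcast : ((N - m : ℕ):ℝ) = (N:ℝ) - (m:ℝ) := by
      rw [Nat.cast_sub hmN]
    have hm24' : (24:ℝ) * (N:ℝ) < 1000 * (m:ℝ) := by exact_mod_cast hm24
    have hfinal : (1/(2*(N:ℝ))) * ((N:ℝ) + ((N - m : ℕ):ℝ)) < 0.988 := by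
      rw [hmcast, one_div_mul_eq_div, div_lt_iff₀ (by positivity)]
      nlinarith
    linarith
  -- transfer the witness to `u`
  set u := (N:ℝ)⁻¹ • A with hu
  set v := (N:ℝ)⁻¹ • (Comp + T) with hv
  have hZuv : Z = (2:ℝ)⁻¹ • u + (2:ℝ)⁻¹ • v := by
    rw [hZ, hu, hv, smul_smul, smul_smul, ← smul_add]
    congr 1
    · rw [one_div, mul_inv]
    · abel
  set Su := ∑ i ∈ Finset.Icc 1 kz, ((1:ℝ)/3)^i *
    ∑ jj ∈ Finset.range (nseq i), ν (restrF (E i jj) u) with hSu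
  set Sv := ∑ i ∈ Finset.Icc 1 kz, ((1:ℝ)/3)^i *
    ∑ jj ∈ Finset.range (nseq i), ν (restrF (E i jj) v) with hSv
  have hterm : ∀ S : Set ℕ, ν (restrF S Z) ≤ 2⁻¹ * ν (restrF S u) + 2⁻¹ * ν (restrF S v) := by
    intro S
    calc ν (restrF S Z) = ν ((2:ℝ)⁻¹ • restrF S u + (2:ℝ)⁻¹ • restrF S v) := by
          rw [hZuv, restrF_add]
          simp only [restrF_smul]
      _ ≤ ν ((2:ℝ)⁻¹ • restrF S u) + ν ((2:ℝ)⁻¹ • restrF S v) := hν.2.2.2 _ _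
      _ = 2⁻¹ * ν (restrF S u) + 2⁻¹ * ν (restrF S v) := by
          rw [hν.2.2.1 (2⁻¹ : ℝ) (restrF S u), hν.2.2.1 (2⁻¹ : ℝ) (restrF S v),
            abs_of_pos (by norm_num : (0:ℝ) < 2⁻¹)]
  have hr_le_S : r ≤ 2⁻¹ * Su + 2⁻¹ * Sv := by
    rw [hrEq, hSu, hSv]
    calc ∑ i ∈ Finset.Icc 1 kz, ((1:ℝ)/3)^i * ∑ jj ∈ Finset.range (nseq i), ν (restrF (E i jj) Z)
        ≤ ∑ i ∈ Finset.Icc 1 kz, ((1:ℝ)/3)^i *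
          ∑ jj ∈ Finset.range (nseq i),
            (2⁻¹ * ν (restrF (E i jj) u) + 2⁻¹ * ν (restrF (E i jj) v)) := by
          refine Finset.sum_le_sum fun i _ => ?_
          refine mul_le_mul_of_nonneg_left ?_ (pow_nonneg (by norm_num) i)
          exact Finset.sum_le_sum fun jj _ => hterm _
      _ = 2⁻¹ * (∑ i ∈ Finset.Icc 1 kz, ((1:ℝ)/3)^i *
            ∑ jj ∈ Finset.range (nseq i), ν (restrF (E i jj) u))
          + 2⁻¹ * (∑ i ∈ Finset.Icc 1 kz, ((1:ℝ)/3)^i *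
            ∑ jj ∈ Finset.range (nseq i), ν (restrF (E i jj) v)) := by
          rw [Finset.sum_congr rfl (fun i (_ : i ∈ Finset.Icc 1 kz) => by
            rw [Finset.sum_add_distrib, ← Finset.mul_sum, ← Finset.mul_sum]
            ring :
            ∀ i ∈ Finset.Icc 1 kz, ((1:ℝ)/3)^i *
              ∑ jj ∈ Finset.range (nseq i),
                (2⁻¹ * ν (restrF (E i jj) u) + 2⁻¹ * ν (restrF (E i jj) v))
              = 2⁻¹ * (((1:ℝ)/3)^i * ∑ jj ∈ Finset.range (nseq i), ν (restrF (E i jj) u))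
              + 2⁻¹ * (((1:ℝ)/3)^i * ∑ jj ∈ Finset.range (nseq i), ν (restrF (E i jj) v)))]
          rw [Finset.sum_add_distrib, ← Finset.mul_sum, ← Finset.mul_sum]
  -- Sv is at most 1
  have hSv1 : Sv ≤ 1 := by
    have hSvmem : Sv ∈ normSetA ν nseq v := ⟨kz, hkz, E, hEne, hEge, hEinc, rfl⟩
    have h1 : Sv ≤ ν v :=
      le_trans (le_csSup (bddAbove_normSetA hν nseq v) hSvmem)
        ((le_max_right _ _).trans (le_of_eq (hEq v).symm))
    have h2 : ν v ≤ 1 := by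
      rw [hv, hν.2.2.1]
      have hCT : ν (Comp + T) ≤ (m:ℝ) + ((N - m : ℕ):ℝ) := by
        refine (hν.2.2.2 Comp T).trans ?_
        have hC1 : ν Comp ≤ (m:ℝ) := by
          refine (nu_sum_le hν _ _).trans ?_
          rw [show ∑ t ∈ Finset.range m, ν (y (idx t)) = ∑ t ∈ Finset.range m, (1:ℝ) from
            Finset.sum_congr rfl fun s _ => hnorm _]
          simp
        have hT1 : ν T ≤ ((N - m : ℕ):ℝ) := by
          refine (nu_sum_le hν _ _).trans ?_
          rw [show ∑ t ∈ Finset.range (N-m), ν (y (idx (m + (N + t))))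
              = ∑ t ∈ Finset.range (N-m), (1:ℝ) from
            Finset.sum_congr rfl fun s _ => hnorm _]
          simp
        linarith
      have hmcast : ((N - m : ℕ):ℝ) = (N:ℝ) - (m:ℝ) := by rw [Nat.cast_sub hmN]
      rw [abs_of_pos (by positivity : (0:ℝ) < (N:ℝ)⁻¹)]
      calc (N:ℝ)⁻¹ * ν (Comp + T) ≤ (N:ℝ)⁻¹ * ((m:ℝ) + ((N - m : ℕ):ℝ)) :=
            mul_le_mul_of_nonneg_left hCT (by positivity)
        _ = 1 := by
            rw [hmcast]
            field_simp
            ring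
    linarith
  -- Su is bounded by the target sum
  have hu_supp : ∀ t' ∈ u.support, kb + 1 ≤ t' := by
    intro t' ht'
    have h1 : t' ∈ A.support := Finsupp.support_smul ht'
    obtain ⟨s, hs, ht'mem⟩ := Finset.mem_biUnion.mp (Finsupp.support_finset_sum h1)
    have hidxms : n + m - 1 < idx (m + s) := by
      have : n + m ≤ idx (m + s) := by
        rw [hidx]; simp only; rw [if_neg (by omega)]; omega
      omega
    have := blocks_lt hblock hidxms kb (Finset.max'_mem _ _) t' ht'mem
    omega
  have hAu : A = ∑ s : Fin N, y (n + m + j s) := by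
    rw [hA, ← Fin.sum_univ_eq_sum_range (fun s => y (idx (m + s))) N]
    refine Finset.sum_congr rfl fun s _ => ?_
    congr 1
    rw [hidx]
    simp only
    rw [if_neg (by omega), Nat.add_sub_cancel_left, hjext_eq s]
  have hSu_le : Su ≤ ∑ i ∈ Finset.Icc 1 (kb+1), ((1:ℝ)/3)^i * normI ν nseq i u := by
    calc Su ≤ ∑ i ∈ Finset.Icc 1 kz, ((1:ℝ)/3)^i * normI ν nseq i u := by
          rw [hSu]
          refine Finset.sum_le_sum fun i hi => ?_
          rw [Finset.mem_Icc] at hi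
          exact mul_le_mul_of_nonneg_left
            (le_normI hν (hEne i hi.1 hi.2) (hEinc i hi.1 hi.2))
            (pow_nonneg (by norm_num) i)
      _ ≤ ∑ i ∈ Finset.Icc 1 (kb+1), ((1:ℝ)/3)^i * normI ν nseq i u := by
          refine Finset.sum_le_sum_of_subset_of_nonneg
            (Finset.Icc_subset_Icc_right (by omega)) fun i _ _ =>
            mul_nonneg (pow_nonneg (by norm_num) i) (normI_nonneg hν nseq i u)
  -- conclude
  have hrestru : restrF (Set.Ici (kb+1)) ((N:ℝ)⁻¹ • ∑ s : Fin N, y (n + m + j s)) = u := by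
    rw [← hAu, ← hu]
    exact restrF_eq_self fun t ht => Set.mem_Ici.mpr (hu_supp t ht)
  rw [hrestru]
  have hSu_ge : 0.976 ≤ Su := by linarith
  linarith

end
end

section
/- Let n, m ∈ ℕ, ε > 0, and let (x^{(1)}_i)_i, (x^{(2)}_i)_i, ..., (x^{(n)}_i)_i be normalized weakly null sequences in a Banach space X. Then there exists an infinite subset L of ℕ such that for all families of integers (k^{(j)}_i) and (ℓ^{(j)}_i) (i = 1,...,m, j = 1,...,n) in L satisfying k_1^{(1)} < k_1^{(2)} < ... < k_1^{(n)} < k_2^{(1)} < ... < k_2^{(n)} < ... < k_m^{(1)} < ... < k_m^{(n)} and ℓ_1^{(1)} < ℓ_1^{(2)} < ... < ℓ_1^{(n)} < ℓ_2^{(1)} < ... < ℓ_m^{(n)}, and all scalars (a^{(j)}_i)_{i=1,j=1}^{m,n} ⊆ [-1,1], one has | ‖Σ_{i=1}^m Σ_{j=1}^n a^{(j)}_i x^{(j)}_{ℓ_i^{(j)}}‖ − ‖Σ_{i=1}^m Σ_{j=1}^n a^{(j)}_i x^{(j)}_{k_i^{(j)}}‖ | ≤ ε. -/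
open scoped BigOperators ENNReal NNReal
open Filter

noncomputable section

/-- `x` is a basic sequence: all terms are nonzero and there is a uniform bound on the
norms of the partial-sum projections. -/
def IsBasicSeq {X : Type*} [NormedAddCommGroup X] [NormedSpace ℝ X] (x : ℕ → X) : Prop :=
  (∀ i, x i ≠ 0) ∧
  ∃ K : ℝ, 1 ≤ K ∧ ∀ (a : ℕ → ℝ) (m n : ℕ), m ≤ n →
    ‖∑ i ∈ Finset.range m, a i • x i‖ ≤ K * ‖∑ i ∈ Finset.range n, a i • x i‖

def IsNormalizedSeq {X : Type*} [NormedAddCommGroup X] (x : ℕ → X) : Prop := ∀ i, ‖x i‖ = 1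

def IsSeminormalizedSeq {X : Type*} [NormedAddCommGroup X] (x : ℕ → X) : Prop :=
  ∃ c C : ℝ, 0 < c ∧ ∀ i, c ≤ ‖x i‖ ∧ ‖x i‖ ≤ C

def IsWeaklyNull {X : Type*} [NormedAddCommGroup X] [NormedSpace ℝ X] (x : ℕ → X) : Prop :=
  ∀ f : X →L[ℝ] ℝ, Tendsto (fun i => f (x i)) atTop (nhds 0)

/-- `x` `C`-dominates `y`. -/
def DominatesWith {X Y : Type*} [NormedAddCommGroup X] [NormedSpace ℝ X]
    [NormedAddCommGroup Y] [NormedSpace ℝ Y] (C : ℝ) (x : ℕ → X) (y : ℕ → Y) : Prop :=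
  ∀ (n : ℕ) (a : ℕ → ℝ),
    ‖∑ i ∈ Finset.range n, a i • y i‖ ≤ C * ‖∑ i ∈ Finset.range n, a i • x i‖

def Dominates {X Y : Type*} [NormedAddCommGroup X] [NormedSpace ℝ X]
    [NormedAddCommGroup Y] [NormedSpace ℝ Y] (x : ℕ → X) (y : ℕ → Y) : Prop :=
  ∃ C : ℝ, 1 ≤ C ∧ DominatesWith C x y

def EquivSeqs {X Y : Type*} [NormedAddCommGroup X] [NormedSpace ℝ X]
    [NormedAddCommGroup Y] [NormedSpace ℝ Y] (x : ℕ → X) (y : ℕ → Y) : Prop :=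
  Dominates x y ∧ Dominates y x

/-- `xt` (a sequence in `Y`) is a spreading model of the sequence `x` of `X`. -/
def IsSpreadingModelOf {X Y : Type*} [NormedAddCommGroup X] [NormedSpace ℝ X]
    [NormedAddCommGroup Y] [NormedSpace ℝ Y] (x : ℕ → X) (xt : ℕ → Y) : Prop :=
  IsBasicSeq xt ∧ ∃ ε : ℕ → ℝ, (∀ n, 0 < ε n) ∧ Antitone ε ∧ Tendsto ε atTop (nhds 0) ∧
    ∀ (n : ℕ) (a : Fin n → ℝ), (∀ i, |a i| ≤ 1) →
      ∀ k : Fin n → ℕ, StrictMono k → (∀ i, n ≤ k i) →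
        |‖∑ i, a i • x (k i)‖ - ‖∑ i, a i • xt (i : ℕ)‖| < ε n

/-- the `ℓ_p`-norm of a finite vector of reals (`p = ∞` giving the sup norm). -/
def lpNormFin (p : ℝ≥0∞) {n : ℕ} (a : Fin n → ℝ) : ℝ :=
  if p = ⊤ then ⨆ i, |a i| else (∑ i, |a i| ^ p.toReal) ^ (1 / p.toReal)

/-- `x` is equivalent to the unit vector basis of `ℓ_p` (of `c₀` if `p = ∞`). -/
def EquivToLpBasis {Y : Type*} [NormedAddCommGroup Y] [NormedSpace ℝ Y]
    (p : ℝ≥0∞) (x : ℕ → Y) : Prop :=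
  ∃ C : ℝ, 1 ≤ C ∧ ∀ (n : ℕ) (a : Fin n → ℝ),
    lpNormFin p a ≤ C * ‖∑ i, a i • x (i : ℕ)‖ ∧
    ‖∑ i, a i • x (i : ℕ)‖ ≤ C * lpNormFin p a

/-- `p` belongs to the Krivine set of the sequence `x`. -/
def InKrivineSet {Y : Type*} [NormedAddCommGroup Y] [NormedSpace ℝ Y]
    (p : ℝ≥0∞) (x : ℕ → Y) : Prop :=
  ∀ ε : ℝ, 0 < ε → ∀ n : ℕ, ∃ m : ℕ, 0 < m ∧ ∃ lam : Fin m → ℝ, ∀ a : Fin n → ℝ,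
    (1 + ε)⁻¹ * lpNormFin p a ≤
        ‖∑ i : Fin n, a i • ∑ k : Fin m, lam k • x ((i : ℕ) * m + (k : ℕ))‖ ∧
    ‖∑ i : Fin n, a i • ∑ k : Fin m, lam k • x ((i : ℕ) * m + (k : ℕ))‖ ≤ (1 + ε) * lpNormFin p a

/-- `y` is a block basis of `e`. -/
def IsBlockBasis {X : Type*} [NormedAddCommGroup X] [NormedSpace ℝ X]
    (e y : ℕ → X) : Prop :=
  ∃ (q : ℕ → ℕ) (c : ℕ → ℝ), StrictMono q ∧ (∀ j, y j ≠ 0) ∧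
    ∀ j, y j = ∑ i ∈ Finset.Ico (q j) (q (j + 1)), c i • e i


theorem myInfRamsey {C : Type*} [Finite C] : ∀ (r : ℕ) (f : (Fin r → ℕ) → C) (S : Set ℕ),
    S.Infinite →
    ∃ L, L ⊆ S ∧ L.Infinite ∧ ∃ c, ∀ t : Fin r → ℕ, StrictMono t → (∀ i, t i ∈ L) → f t = c := by
  intro r
  induction r with
  | zero =>
    intro f S hS
    refine ⟨S, subset_rfl, hS, f (fun i => i.elim0), fun t _ _ => ?_⟩
    congr 1; funext i; exact i.elim0
  | succ r ih =>
    intro f S hS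
    have key : ∀ T : Set ℕ, T.Infinite → ∃ T', T' ⊆ T ∧ T'.Infinite ∧
        (∀ x ∈ T', sInf T < x) ∧ ∃ c, ∀ t : Fin r → ℕ, StrictMono t →
          (∀ i, t i ∈ T') → f (Fin.cons (sInf T) t) = c := by
      intro T hT
      have hinf : (T ∩ Set.Ioi (sInf T)).Infinite := by
        have h1 : (T \ Set.Iic (sInf T)).Infinite := hT.diff (Set.finite_Iic _)
        have : T \ Set.Iic (sInf T) = T ∩ Set.Ioi (sInf T) := by
          ext y; simp [Set.mem_diff, not_le]
        rwa [this] at h1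
      obtain ⟨L, hLsub, hLinf, c, hc⟩ := ih (fun t => f (Fin.cons (sInf T) t)) _ hinf
      exact ⟨L, hLsub.trans Set.inter_subset_left, hLinf,
        fun x hx => (hLsub hx).2, c, hc⟩
    choose nxt h1 h2 h3 col h4 using key
    let seq : ℕ → {T : Set ℕ // T.Infinite} := fun k =>
      Nat.rec ⟨S, hS⟩ (fun _ p => ⟨nxt p.1 p.2, h2 p.1 p.2⟩) k
    have hstep : ∀ k, (seq (k+1)).1 = nxt (seq k).1 (seq k).2 := fun k => rfl
    set a : ℕ → ℕ := fun k => sInf (seq k).1 with ha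
    have hmem : ∀ k, a k ∈ (seq k).1 := fun k => Nat.sInf_mem (seq k).2.nonempty
    have hsub' : ∀ k, (seq (k+1)).1 ⊆ (seq k).1 := fun k => h1 _ _
    have hchain : ∀ k k', k ≤ k' → (seq k').1 ⊆ (seq k).1 := by
      intro k k' hk
      induction k' , hk using Nat.le_induction with
      | base => exact subset_rfl
      | succ k' hk ihh => exact (hsub' k').trans ihh
    have hamono : StrictMono a :=
      strictMono_nat_of_lt_succ fun k => h3 _ _ _ (hmem (k+1))
    obtain ⟨c, hc⟩ := Finite.exists_infinite_fiber (fun k => col (seq k).1 (seq k).2)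
    set K : Set ℕ := (fun k => col (seq k).1 (seq k).2) ⁻¹' {c} with hK
    have hKinf : K.Infinite := Set.infinite_coe_iff.mp hc
    refine ⟨a '' K, ?_, hKinf.image (hamono.injective.injOn), c, ?_⟩
    · rintro x ⟨k, _, rfl⟩
      exact hchain 0 k (Nat.zero_le k) (hmem k)
    · intro t ht htL
      obtain ⟨k₀, hk₀K, hk₀⟩ := htL 0
      have htail : ∀ i : Fin r, Fin.tail t i ∈ (seq (k₀+1)).1 := by
        intro i
        obtain ⟨k', hk'K, hk'⟩ := htL i.succ
        have hgt : a k₀ < a k' := by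
          rw [hk₀, hk']; exact ht (Fin.succ_pos i)
        have : k₀ < k' := hamono.lt_iff_lt.mp hgt
        have := hchain (k₀+1) k' this (hmem k')
        rwa [hk'] at this
      have htm : StrictMono (Fin.tail t) := fun i j hij =>
        ht (by simpa using Fin.succ_lt_succ_iff.mpr hij)
      have := h4 (seq k₀).1 (seq k₀).2 (Fin.tail t) htm (fun i => by
        have := htail i; rwa [hstep] at this)
      have hcol : col (seq k₀).1 (seq k₀).2 = c := hk₀K
      rw [← hcol]
      rw [← this]
      congr 1
      have : sInf (seq k₀).1 = t 0 := hk₀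
      rw [this, Fin.cons_self_tail]


-- floor closeness
theorem myFloorClose {δ u v : ℝ} (hδ : 0 < δ) (hu : 0 ≤ u) (hv : 0 ≤ v)
    (h : ⌊u/δ⌋₊ = ⌊v/δ⌋₊) : |u - v| < δ := by
  have h1 : u/δ < (⌊v/δ⌋₊ : ℝ) + 1 := h ▸ Nat.lt_floor_add_one (u/δ)
  have h2 : v/δ < (⌊u/δ⌋₊ : ℝ) + 1 := h ▸ Nat.lt_floor_add_one (v/δ)
  have h3 : (⌊v/δ⌋₊ : ℝ) ≤ v/δ := Nat.floor_le (by positivity)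
  have h4 : (⌊u/δ⌋₊ : ℝ) ≤ u/δ := Nat.floor_le (by positivity)
  rw [abs_sub_lt_iff]
  constructor
  · have : u/δ - v/δ < 1 := by linarith
    have := (div_lt_one hδ).mp (by rw [sub_div]; exact this)
    linarith
  · have : v/δ - u/δ < 1 := by linarith
    have := (div_lt_one hδ).mp (by rw [sub_div]; exact this)
    linarith

-- norm bound for mixed sums
theorem myNormBound {X : Type*} [NormedAddCommGroup X] [NormedSpace ℝ X]
    {n m : ℕ} (x : Fin n → ℕ → X) (hx : ∀ j i, ‖x j i‖ = 1)
    (η : ℝ) (b : Fin m → Fin n → ℝ) (hb : ∀ i j, |b i j| ≤ η)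
    (w : Fin m → Fin n → ℕ) :
    ‖∑ i : Fin m, ∑ j : Fin n, b i j • x j (w i j)‖ ≤ m * n * η := by
  calc ‖∑ i : Fin m, ∑ j : Fin n, b i j • x j (w i j)‖
      ≤ ∑ i : Fin m, ‖∑ j : Fin n, b i j • x j (w i j)‖ := norm_sum_le _ _
    _ ≤ ∑ i : Fin m, ∑ j : Fin n, ‖b i j • x j (w i j)‖ :=
        Finset.sum_le_sum fun i _ => norm_sum_le _ _
    _ = ∑ i : Fin m, ∑ j : Fin n, |b i j| := by
        simp [norm_smul, hx]
    _ ≤ ∑ i : Fin m, ∑ j : Fin n, η :=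
        Finset.sum_le_sum fun i _ => Finset.sum_le_sum fun j _ => hb i j
    _ = m * n * η := by simp [Finset.sum_const, mul_assoc]


theorem myNet {K : ℕ} (hK : 0 < K) (aij : ℝ) (h : |aij| ≤ 1) :
    ∃ s : Fin (K+1), |aij - (-1 + 2 * (s : ℕ) / (K:ℝ))| ≤ 2 / K := by
  have hK' : (0:ℝ) < K := by exact_mod_cast hK
  set y : ℝ := (aij + 1) * K / 2 with hy
  have ha1 : -1 ≤ aij := (abs_le.mp h).1
  have ha2 : aij ≤ 1 := (abs_le.mp h).2
  have hy0 : 0 ≤ y := div_nonneg (mul_nonneg (by linarith) hK'.le) (by norm_num)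
  have hyK : y ≤ K := by rw [hy, div_le_iff₀ (by norm_num : (0:ℝ) < 2)]; nlinarith
  have hvK : ⌊y⌋₊ ≤ K := by
    calc ⌊y⌋₊ ≤ ⌊(K:ℝ)⌋₊ := Nat.floor_mono hyK
      _ = K := Nat.floor_natCast K
  refine ⟨⟨⌊y⌋₊, Nat.lt_succ_of_le hvK⟩, ?_⟩
  have h1 : (⌊y⌋₊:ℝ) ≤ y := Nat.floor_le hy0
  have h2 : y < ⌊y⌋₊ + 1 := Nat.lt_floor_add_one y
  have haij : aij = -1 + 2 * y / K := by field_simp [hy]; rw [hy]; ring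
  show |aij - (-1 + 2 * (⌊y⌋₊:ℝ) / K)| ≤ 2/K
  rw [haij]
  have e : (-1 + 2*y/(K:ℝ)) - (-1 + 2*(⌊y⌋₊:ℝ)/K) = 2*(y - ⌊y⌋₊)/K := by ring
  rw [e, abs_of_nonneg (div_nonneg (mul_nonneg (by norm_num) (by linarith)) hK'.le)]
  rw [div_le_div_iff₀ hK' hK']
  nlinarith

theorem myTuple {m n : ℕ} (hn : 0 < n) (w : Fin m → Fin n → ℕ)
    (hw : ∀ (i i' : Fin m) (j j' : Fin n), (i < i' ∨ (i = i' ∧ j < j')) → w i j < w i' j') :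
    ∃ t : Fin (m*n) → ℕ, StrictMono t ∧
      (∀ (i : Fin m) (j : Fin n) (h : (i:ℕ)*n+(j:ℕ) < m*n), t ⟨(i:ℕ)*n+(j:ℕ), h⟩ = w i j) ∧
      (∀ p, ∃ i j, t p = w i j) := by
  have hdiv : ∀ p : Fin (m*n), (p:ℕ)/n < m := fun p =>
    (Nat.div_lt_iff_lt_mul hn).mpr p.isLt
  refine ⟨fun p => w ⟨(p:ℕ)/n, hdiv p⟩ ⟨(p:ℕ)%n, Nat.mod_lt _ hn⟩, ?_, ?_, fun p => ⟨_, _, rfl⟩⟩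
  · intro p q hpq
    apply hw
    have e1 := Nat.div_add_mod (p:ℕ) n
    have e2 := Nat.div_add_mod (q:ℕ) n
    have hpq' : (p:ℕ) < (q:ℕ) := hpq
    have hle : (p:ℕ)/n ≤ (q:ℕ)/n := Nat.div_le_div_right (le_of_lt hpq')
    rcases eq_or_lt_of_le hle with heq | hlt
    · right
      refine ⟨Fin.ext heq, ?_⟩
      simp only [Fin.lt_def]
      rw [← heq] at e2
      omega
    · left
      simpa [Fin.lt_def] using hlt
  · intro i j h
    have hi : ((i:ℕ)*n+(j:ℕ))/n = (i:ℕ) := by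
      rw [mul_comm, Nat.mul_add_div hn, Nat.div_eq_of_lt j.isLt, add_zero]
    have hj : ((i:ℕ)*n+(j:ℕ))%n = (j:ℕ) := by
      rw [mul_comm, Nat.mul_add_mod, Nat.mod_eq_of_lt j.isLt]
    show w _ _ = w i j
    congr 1
    · exact Fin.ext (by simpa using hi)
    · exact Fin.ext (by simpa using hj)


/-- **Lemma 3.4.** For normalized weakly null sequences `(x^{(1)}_i), …, (x^{(n)}_i)`
and `ε > 0` there is an infinite `L ⊆ ℕ` such that for all interleaved families
`(k^{(j)}_i)` and `(ℓ^{(j)}_i)` from `L` and scalars in `[-1,1]`, the two mixed sums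
have norms within `ε` of each other. -/
theorem statement6 {X : Type*} [NormedAddCommGroup X] [NormedSpace ℝ X]
    (n m : ℕ) (ε : ℝ) (hε : 0 < ε)
    (x : Fin n → ℕ → X) (hnorm : ∀ j, IsNormalizedSeq (x j))
    (hwn : ∀ j, IsWeaklyNull (x j)) :
    ∃ L : Set ℕ, L.Infinite ∧
      ∀ (k l : Fin m → Fin n → ℕ),
        (∀ i j, k i j ∈ L) → (∀ i j, l i j ∈ L) →
        (∀ (i i' : Fin m) (j j' : Fin n),
          (i < i' ∨ (i = i' ∧ j < j')) → k i j < k i' j') →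
        (∀ (i i' : Fin m) (j j' : Fin n),
          (i < i' ∨ (i = i' ∧ j < j')) → l i j < l i' j') →
        ∀ a : Fin m → Fin n → ℝ, (∀ i j, |a i j| ≤ 1) →
          |‖∑ i : Fin m, ∑ j : Fin n, a i j • x j (l i j)‖ -
            ‖∑ i : Fin m, ∑ j : Fin n, a i j • x j (k i j)‖| ≤ ε := by
  classical
  rcases Nat.eq_zero_or_pos n with hn | hn
  · subst hn
    refine ⟨Set.univ, Set.infinite_univ, ?_⟩
    intro k l _ _ _ _ a _
    simp [hε.le]
  · set Knat : ℕ := ⌈8*(m:ℝ)*n/ε⌉₊ + 1 with hKnat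
    have hKpos : 0 < Knat := Nat.succ_pos _
    have hKR : (0:ℝ) < Knat := by exact_mod_cast hKpos
    have hKbig : 8*(m:ℝ)*n/ε ≤ Knat := by
      calc (8*(m:ℝ)*n/ε) ≤ ⌈8*(m:ℝ)*n/ε⌉₊ := Nat.le_ceil _
        _ ≤ (Knat:ℝ) := by rw [hKnat]; exact_mod_cast Nat.le_succ _
    set δ : ℝ := ε/2 with hδdef
    have hδpos : 0 < δ := half_pos hε
    set B : ℕ := ⌈((m:ℝ)*n)/δ⌉₊ with hBdef
    have hidx : ∀ (i : Fin m) (j : Fin n), (i:ℕ)*n+(j:ℕ) < m*n := by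
      intro i j
      calc (i:ℕ)*n+(j:ℕ) < (i:ℕ)*n+n := by have := j.isLt; omega
        _ = ((i:ℕ)+1)*n := by ring
        _ ≤ m*n := Nat.mul_le_mul (Nat.succ_le_of_lt i.isLt) le_rfl
    have hx1 : ∀ (j : Fin n) (i : ℕ), ‖x j i‖ = 1 := fun j i => hnorm j i
    set F : (Fin (m*n) → ℕ) → ((Fin m → Fin n → Fin (Knat+1)) → Fin (B+1)) :=
      fun t s => ⟨min ⌊‖∑ i : Fin m, ∑ j : Fin n,
          (-1 + 2*((s i j : ℕ):ℝ)/(Knat:ℝ)) • x j (t ⟨(i:ℕ)*n+(j:ℕ), hidx i j⟩)‖ / δ⌋₊ B,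
        Nat.lt_succ_of_le (min_le_right _ _)⟩ with hF
    obtain ⟨L, -, hLinf, c, hc⟩ := myInfRamsey (m*n) F Set.univ Set.infinite_univ
    refine ⟨L, hLinf, ?_⟩
    intro k l hkL hlL hkmono hlmono a ha
    obtain ⟨tk, htkm, htke, htkv⟩ := myTuple hn k hkmono
    obtain ⟨tl, htlm, htle, htlv⟩ := myTuple hn l hlmono
    have hck : F tk = c := hc tk htkm (fun p => by
      obtain ⟨i, j, e⟩ := htkv p; rw [e]; exact hkL i j)
    have hcl : F tl = c := hc tl htlm (fun p => by
      obtain ⟨i, j, e⟩ := htlv p; rw [e]; exact hlL i j)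
    choose s hs using fun (i : Fin m) (j : Fin n) => myNet hKpos (a i j) (ha i j)
    have hb1 : ∀ i j, |(-1 + 2*((s i j : ℕ):ℝ)/(Knat:ℝ))| ≤ 1 := by
      intro i j
      have hsle : ((s i j : ℕ):ℝ) ≤ Knat := by
        exact_mod_cast Nat.lt_succ_iff.mp (s i j).isLt
      have hs0 : (0:ℝ) ≤ ((s i j : ℕ):ℝ) := by positivity
      rw [abs_le]
      constructor
      · have : 0 ≤ 2*((s i j : ℕ):ℝ)/Knat := by positivity
        linarith
      · have : 2*((s i j : ℕ):ℝ)/Knat ≤ 2 := by rw [div_le_iff₀ hKR]; nlinarith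
        linarith
    have hnormb : ∀ w : Fin m → Fin n → ℕ,
        ‖∑ i : Fin m, ∑ j : Fin n,
          (-1 + 2*((s i j : ℕ):ℝ)/(Knat:ℝ)) • x j (w i j)‖ ≤ (m:ℝ)*n := by
      intro w
      simpa using myNormBound x hx1 1 _ hb1 w
    have hfloorle : ∀ w : Fin m → Fin n → ℕ,
        ⌊‖∑ i : Fin m, ∑ j : Fin n,
          (-1 + 2*((s i j : ℕ):ℝ)/(Knat:ℝ)) • x j (w i j)‖ / δ⌋₊ ≤ B := by
      intro w
      have h2 : ‖∑ i : Fin m, ∑ j : Fin n,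
          (-1 + 2*((s i j : ℕ):ℝ)/(Knat:ℝ)) • x j (w i j)‖ / δ ≤ (m:ℝ)*n/δ := by
        gcongr
        exact hnormb w
      calc ⌊‖∑ i : Fin m, ∑ j : Fin n,
            (-1 + 2*((s i j : ℕ):ℝ)/(Knat:ℝ)) • x j (w i j)‖ / δ⌋₊
          ≤ ⌊(m:ℝ)*n/δ⌋₊ := Nat.floor_mono h2
        _ ≤ B := by rw [hBdef]; exact Nat.floor_le_ceil _
    have key : ∀ (w : Fin m → Fin n → ℕ) (tw : Fin (m*n) → ℕ),
        (∀ (i : Fin m) (j : Fin n) (h : (i:ℕ)*n+(j:ℕ) < m*n),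
          tw ⟨(i:ℕ)*n+(j:ℕ), h⟩ = w i j) → F tw = c →
        ⌊‖∑ i : Fin m, ∑ j : Fin n,
          (-1 + 2*((s i j : ℕ):ℝ)/(Knat:ℝ)) • x j (w i j)‖ / δ⌋₊ = ((c s : Fin (B+1)) : ℕ) := by
      intro w tw he hFc
      have h1 : ((F tw s : Fin (B+1)) : ℕ) = ((c s : Fin (B+1)) : ℕ) := by rw [hFc]
      have h3 : (∑ i : Fin m, ∑ j : Fin n,
            (-1 + 2*((s i j : ℕ):ℝ)/(Knat:ℝ)) • x j (tw ⟨(i:ℕ)*n+(j:ℕ), hidx i j⟩)) =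
          ∑ i : Fin m, ∑ j : Fin n,
            (-1 + 2*((s i j : ℕ):ℝ)/(Knat:ℝ)) • x j (w i j) :=
        Finset.sum_congr rfl fun i _ => Finset.sum_congr rfl fun j _ => by
          rw [he i j (hidx i j)]
      have h2 : ((F tw s : Fin (B+1)) : ℕ) = min ⌊‖∑ i : Fin m, ∑ j : Fin n,
          (-1 + 2*((s i j : ℕ):ℝ)/(Knat:ℝ)) • x j (w i j)‖ / δ⌋₊ B := by
        rw [hF]
        simp only
        rw [h3]
      rw [h2, min_eq_left (hfloorle w)] at h1
      exact h1
    have hmid : |‖∑ i : Fin m, ∑ j : Fin n,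
          (-1 + 2*((s i j : ℕ):ℝ)/(Knat:ℝ)) • x j (l i j)‖ -
        ‖∑ i : Fin m, ∑ j : Fin n,
          (-1 + 2*((s i j : ℕ):ℝ)/(Knat:ℝ)) • x j (k i j)‖| < δ := by
      apply myFloorClose hδpos (norm_nonneg _) (norm_nonneg _)
      rw [key l tl htle hcl, key k tk htke hck]
    have hdiffsum : ∀ w : Fin m → Fin n → ℕ,
        (∑ i : Fin m, ∑ j : Fin n, a i j • x j (w i j)) -
          (∑ i : Fin m, ∑ j : Fin n,
            (-1 + 2*((s i j : ℕ):ℝ)/(Knat:ℝ)) • x j (w i j)) =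
        ∑ i : Fin m, ∑ j : Fin n,
          (a i j - (-1 + 2*((s i j : ℕ):ℝ)/(Knat:ℝ))) • x j (w i j) := by
      intro w
      simp only [← Finset.sum_sub_distrib, sub_smul]
    have hlip : ∀ w : Fin m → Fin n → ℕ,
        |‖∑ i : Fin m, ∑ j : Fin n, a i j • x j (w i j)‖ -
          ‖∑ i : Fin m, ∑ j : Fin n,
            (-1 + 2*((s i j : ℕ):ℝ)/(Knat:ℝ)) • x j (w i j)‖| ≤ (m:ℝ)*n*(2/Knat) := by
      intro w
      calc |‖∑ i : Fin m, ∑ j : Fin n, a i j • x j (w i j)‖ -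
            ‖∑ i : Fin m, ∑ j : Fin n,
              (-1 + 2*((s i j : ℕ):ℝ)/(Knat:ℝ)) • x j (w i j)‖|
          ≤ ‖(∑ i : Fin m, ∑ j : Fin n, a i j • x j (w i j)) -
              (∑ i : Fin m, ∑ j : Fin n,
                (-1 + 2*((s i j : ℕ):ℝ)/(Knat:ℝ)) • x j (w i j))‖ :=
            abs_norm_sub_norm_le _ _
        _ = ‖∑ i : Fin m, ∑ j : Fin n,
              (a i j - (-1 + 2*((s i j : ℕ):ℝ)/(Knat:ℝ))) • x j (w i j)‖ := by
            rw [hdiffsum w]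
        _ ≤ (m:ℝ)*n*(2/Knat) := myNormBound x hx1 (2/Knat) _ (fun i j => hs i j) w
    have hKquarter : (m:ℝ)*n*(2/Knat) ≤ ε/4 := by
      have h8 : 8*(m:ℝ)*n ≤ Knat*ε := by
        rw [div_le_iff₀ hε] at hKbig; linarith
      have he : (m:ℝ)*n*(2/(Knat:ℝ)) = 2*((m:ℝ)*n)/Knat := by ring
      rw [he, div_le_iff₀ hKR]
      nlinarith [hε.le, hKR.le]
    have t1 := hlip l
    have t2 := hlip k
    have t3 := abs_sub_le ‖∑ i : Fin m, ∑ j : Fin n, a i j • x j (l i j)‖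
      ‖∑ i : Fin m, ∑ j : Fin n, (-1 + 2*((s i j : ℕ):ℝ)/(Knat:ℝ)) • x j (l i j)‖
      ‖∑ i : Fin m, ∑ j : Fin n, a i j • x j (k i j)‖
    have t4 := abs_sub_le ‖∑ i : Fin m, ∑ j : Fin n, (-1 + 2*((s i j : ℕ):ℝ)/(Knat:ℝ)) • x j (l i j)‖
      ‖∑ i : Fin m, ∑ j : Fin n, (-1 + 2*((s i j : ℕ):ℝ)/(Knat:ℝ)) • x j (k i j)‖
      ‖∑ i : Fin m, ∑ j : Fin n, a i j • x j (k i j)‖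
    have t5 := abs_sub_comm
      ‖∑ i : Fin m, ∑ j : Fin n, (-1 + 2*((s i j : ℕ):ℝ)/(Knat:ℝ)) • x j (k i j)‖
      ‖∑ i : Fin m, ∑ j : Fin n, a i j • x j (k i j)‖
    have hδε : δ = ε/2 := hδdef
    linarith [hmid]


end
end

section
/- Let n, m ∈ ℕ, ε > 0, and let (x^{(1)}_i)_i, ..., (x^{(n)}_i)_i be normalized weakly null sequences in a Banach space X. Then there exists an infinite subset L of ℕ such that for all integers in L with k_1^{(1)} < k_1^{(2)} < ... < k_1^{(n)} < k_2^{(1)} < ... < k_2^{(n)} < ... < k_m^{(1)} < ... < k_m^{(n)}, the finite sequence of vectors (x^{(j)}_{k^{(j)}_i})_{i=1,...,m, j=1,...,n} forms a suppression (1+ε)-unconditional basic sequence. -/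
open scoped BigOperators ENNReal NNReal
open Filter

noncomputable section

section Helpers

lemma floor_bin {d r r' : ℝ} (hd : 0 < d) (hr : 0 ≤ r) (hr' : 0 ≤ r')
    (h : ⌊r/d⌋₊ = ⌊r'/d⌋₊) : |r - r'| ≤ d := by
  have h1 : (⌊r/d⌋₊ : ℝ) ≤ r/d := Nat.floor_le (by positivity)
  have h2 : r/d < ⌊r/d⌋₊ + 1 := Nat.lt_floor_add_one _
  have h3 : (⌊r'/d⌋₊ : ℝ) ≤ r'/d := Nat.floor_le (by positivity)
  have h4 : r'/d < ⌊r'/d⌋₊ + 1 := Nat.lt_floor_add_one _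
  rw [h] at h1 h2
  have h5 : r / d - r' / d ≤ 1 := by linarith
  have h6 : r' / d - r / d ≤ 1 := by linarith
  have e1 : r - r' = (r/d - r'/d) * d := by field_simp
  have e2 : r' - r = (r'/d - r/d) * d := by field_simp
  rw [abs_sub_le_iff, e1, e2]
  constructor
  · calc (r/d - r'/d) * d ≤ 1 * d := mul_le_mul_of_nonneg_right h5 hd.le
      _ = d := one_mul d
  · calc (r'/d - r/d) * d ≤ 1 * d := mul_le_mul_of_nonneg_right h6 hd.le
      _ = d := one_mul d

lemma ramseyTuples {κ : Type} [Finite κ] [Nonempty κ] :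
    ∀ (N : ℕ) (c : (Fin N → ℕ) → κ) (S : Set ℕ), S.Infinite →
    ∃ T : Set ℕ, T ⊆ S ∧ T.Infinite ∧ ∃ k₀ : κ,
      ∀ g : Fin N → ℕ, StrictMono g → (∀ i, g i ∈ T) → c g = k₀ := by
  intro N
  induction N with
  | zero =>
    intro c S hS
    refine ⟨S, subset_rfl, hS, c (fun i => i.elim0), fun g _ _ => ?_⟩
    congr 1; funext i; exact i.elim0
  | succ N ih =>
    intro c S hS
    have step : ∀ A : Set ℕ, A.Infinite → ∃ (a : ℕ) (B : Set ℕ) (e : κ),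
        a ∈ A ∧ B ⊆ A ∧ (∀ b ∈ B, a < b) ∧ B.Infinite ∧
        ∀ g : Fin N → ℕ, StrictMono g → (∀ i, g i ∈ B) → c (Fin.cons a g) = e := by
      intro A hA
      obtain ⟨a, haA⟩ := hA.nonempty
      have hA' : (A ∩ Set.Ioi a).Infinite := by
        have he : A ∩ Set.Ioi a = A \ Set.Iic a := by
          ext b; simp [Set.mem_Ioi, Set.mem_Iic, not_le]
        rw [he]; exact hA.diff (Set.finite_Iic a)
      obtain ⟨B, hBsub, hBinf, e, he⟩ := ih (fun g => c (Fin.cons a g)) _ hA'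
      exact ⟨a, B, e, haA, hBsub.trans Set.inter_subset_left,
        fun b hb => (hBsub hb).2, hBinf, he⟩
    choose pt nxt col hmem hsub hgt hinf hcol using step
    let chain : ℕ → {A : Set ℕ // A.Infinite} := fun i =>
      Nat.rec ⟨S, hS⟩ (fun _ p => ⟨nxt p.1 p.2, hinf p.1 p.2⟩) i
    set a : ℕ → ℕ := fun i => pt (chain i).1 (chain i).2 with ha_def
    set e : ℕ → κ := fun i => col (chain i).1 (chain i).2 with he_def
    have hchainsucc : ∀ i, (chain (i+1)).1 = nxt (chain i).1 (chain i).2 := fun i => rfl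
    have hchainsub : ∀ i, (chain (i+1)).1 ⊆ (chain i).1 := fun i => hsub _ _
    have hchainmono : ∀ i j, i ≤ j → (chain j).1 ⊆ (chain i).1 := by
      intro i j hij
      induction hij with
      | refl => exact subset_rfl
      | step _ ih2 => exact (hchainsub _).trans ih2
    have hchainS : ∀ i, (chain i).1 ⊆ S := fun i => hchainmono 0 i (Nat.zero_le _)
    have haA : ∀ i, a i ∈ (chain i).1 := fun i => hmem _ _
    have hamono : StrictMono a := by
      apply strictMono_nat_of_lt_succ
      intro i
      exact hgt (chain i).1 (chain i).2 (a (i+1)) (by rw [← hchainsucc i]; exact haA (i+1))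
    obtain ⟨e₀, he₀⟩ := Finite.exists_infinite_fiber e
    have hIinf : (e ⁻¹' {e₀}).Infinite := Set.infinite_coe_iff.mp he₀
    refine ⟨a '' (e ⁻¹' {e₀}), ?_, hIinf.image (hamono.injective.injOn), e₀, ?_⟩
    · rintro b ⟨i, _, rfl⟩; exact hchainS i (haA i)
    · intro g hg hgT
      obtain ⟨i₀, hi₀, hgi₀⟩ := hgT 0
      have htail : ∀ s : Fin N, Fin.tail g s ∈ nxt (chain i₀).1 (chain i₀).2 := by
        intro s
        obtain ⟨j, _, hj⟩ := hgT s.succ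
        have hlt : a i₀ < a j := by
          rw [hgi₀, hj]; exact hg (Fin.succ_pos s)
        have hij : i₀ < j := hamono.lt_iff_lt.mp hlt
        have : a j ∈ (chain (i₀+1)).1 := hchainmono (i₀+1) j hij (haA j)
        rw [hchainsucc] at this
        rw [Fin.tail, ← hj]; exact this
      have htm : StrictMono (Fin.tail g) := by
        intro s s' hss'
        exact hg (Fin.succ_lt_succ_iff.mpr hss')
      have := hcol (chain i₀).1 (chain i₀).2 (Fin.tail g) htm htail
      calc c g = c (Fin.cons (g 0) (Fin.tail g)) := by rw [Fin.cons_self_tail]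
        _ = c (Fin.cons (a i₀) (Fin.tail g)) := by rw [hgi₀]
        _ = e i₀ := this
        _ = e₀ := hi₀


lemma mazur_conv {X : Type*} [NormedAddCommGroup X] [NormedSpace ℝ X] {y : ℕ → X}
    (hy : ∀ f : X →L[ℝ] ℝ, Tendsto (fun i => f (y i)) atTop (nhds 0))
    {S : Set ℕ} (hS : S.Infinite) {δ : ℝ} (hδ : 0 < δ) :
    ∃ (M : ℕ) (p : Fin M → ℕ) (w : Fin M → ℝ), (∀ r, p r ∈ S) ∧ (∀ r, 0 ≤ w r) ∧
      (∑ r, w r) = 1 ∧ ‖∑ r, w r • y (p r)‖ < δ := by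
  have hcl : (0 : X) ∈ closure (convexHull ℝ (y '' S)) := by
    by_contra h0
    obtain ⟨f, u, hfu, hu0⟩ := geometric_hahn_banach_closed_point
      ((convex_convexHull ℝ _).closure) isClosed_closure h0
    rw [map_zero] at hu0
    have hev : ∀ᶠ i in atTop, u < f (y i) := (hy f).eventually (eventually_gt_nhds hu0)
    obtain ⟨M, hM⟩ := eventually_atTop.mp hev
    obtain ⟨i, hiS, hiM⟩ := hS.exists_gt M
    have h1 : f (y i) < u :=
      hfu _ (subset_closure (subset_convexHull ℝ _ ⟨i, hiS, rfl⟩))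
    exact absurd (hM i hiM.le) (not_lt.mpr h1.le)
  obtain ⟨z, hz, hzd⟩ := Metric.mem_closure_iff.mp hcl δ hδ
  rw [convexHull_eq] at hz
  obtain ⟨ι, t, w, zf, hw0, hw1, hzs, hcm⟩ := hz
  rw [Finset.centerMass_eq_of_sum_1 _ _ hw1] at hcm
  have hdist : ‖z‖ < δ := by rw [dist_eq_norm] at hzd; simpa using hzd
  -- choose preimages
  have hpre : ∀ i : t, ∃ j, j ∈ S ∧ y j = zf i := fun i => by
    obtain ⟨j, hj, hj2⟩ := hzs i i.2; exact ⟨j, hj, hj2⟩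
  choose pj hpjS hpjy using hpre
  refine ⟨t.card, fun r => pj (t.equivFin.symm r), fun r => w (t.equivFin.symm r),
    fun r => hpjS _, fun r => hw0 _ (t.equivFin.symm r).2, ?_, ?_⟩
  · have e1 : ∑ i : t, w i = ∑ r : Fin t.card, w (t.equivFin.symm r) :=
      Fintype.sum_equiv t.equivFin (fun i : t => w (i : ι)) _
        (fun i => by rw [Equiv.symm_apply_apply])
    show (∑ r : Fin t.card, w ((t.equivFin.symm r : t) : ι)) = 1
    rw [← e1, Finset.sum_coe_sort t w]
    exact hw1
  · have : (∑ r : Fin t.card, w (t.equivFin.symm r) • y (pj (t.equivFin.symm r)))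
        = ∑ i ∈ t, w i • zf i := by
      rw [← Finset.sum_coe_sort t (fun i => w i • zf i)]
      refine (Fintype.sum_equiv t.equivFin (fun i : t => w (i : ι) • zf (i : ι))
        (fun r => w (t.equivFin.symm r) • y (pj (t.equivFin.symm r))) (fun i => ?_)).symm
      simp only [Equiv.symm_apply_apply, hpjy]
    rw [this, hcm]
    exact hdist


/-- Auxiliary sum used throughout. -/
def Sfun {X : Type*} [NormedAddCommGroup X] [NormedSpace ℝ X] {n m : ℕ}
    (x : Fin n → ℕ → X) (a : Fin m × Fin n → ℝ) (κ : Fin m × Fin n → ℕ) : X :=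
  ∑ p, a p • x p.2 (κ p)

/-- Zero out coefficients on a finite set. -/
def zeroOn {m n : ℕ} (G : Finset (Fin m × Fin n)) (a : Fin m × Fin n → ℝ) :
    Fin m × Fin n → ℝ := fun p => if p ∈ G then 0 else a p

/-- Lexicographic strict order on pairs. -/
def LexLt {m n : ℕ} (p q : Fin m × Fin n) : Prop :=
  p.1 < q.1 ∨ (p.1 = q.1 ∧ p.2 < q.2)

lemma idx_lt {m n : ℕ} (p : Fin m × Fin n) : (p.1 : ℕ) * n + (p.2 : ℕ) < m * n := by
  have h1 : (p.2 : ℕ) < n := p.2.isLt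
  have h2 : (p.1 : ℕ) + 1 ≤ m := p.1.isLt
  calc (p.1 : ℕ) * n + p.2 < (p.1 : ℕ) * n + n := by omega
    _ = ((p.1 : ℕ) + 1) * n := by ring
    _ ≤ m * n := Nat.mul_le_mul_right n h2

def psiFun (m n : ℕ) (hn : 0 < n) : Fin (m*n) → Fin m × Fin n := fun s =>
  (⟨(s : ℕ) / n, (Nat.div_lt_iff_lt_mul hn).mpr s.isLt⟩, ⟨(s : ℕ) % n, Nat.mod_lt _ hn⟩)

lemma psi_idx {m n : ℕ} (hn : 0 < n) (p : Fin m × Fin n) :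
    psiFun m n hn ⟨(p.1 : ℕ) * n + p.2, idx_lt p⟩ = p := by
  unfold psiFun
  have h1 : ((p.1 : ℕ) * n + p.2) / n = p.1 := by
    rw [Nat.add_comm, Nat.add_mul_div_right _ _ hn, Nat.div_eq_of_lt p.2.isLt, Nat.zero_add]
  have h2 : ((p.1 : ℕ) * n + p.2) % n = p.2 := by
    rw [Nat.add_comm, Nat.add_mul_mod_self_right, Nat.mod_eq_of_lt p.2.isLt]
  ext
  · simpa using h1
  · simpa using h2

lemma psi_lex {m n : ℕ} (hn : 0 < n) {s s' : Fin (m*n)} (h : s < s') :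
    LexLt (psiFun m n hn s) (psiFun m n hn s') := by
  unfold psiFun LexLt
  simp only [Fin.mk_lt_mk, Fin.mk.injEq]
  have h1 : (s : ℕ) / n ≤ (s' : ℕ) / n := Nat.div_le_div_right (le_of_lt h)
  rcases lt_or_eq_of_le h1 with h2 | h2
  · exact Or.inl h2
  · right
    refine ⟨h2, ?_⟩
    have e1 : n * ((s:ℕ)/n) + (s:ℕ)%n = s := Nat.div_add_mod _ _
    have e2 : n * ((s':ℕ)/n) + (s':ℕ)%n = s' := Nat.div_add_mod _ _
    rw [h2] at e1
    have h3 : (s : ℕ) < (s' : ℕ) := h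
    omega

lemma idx_mono {m n : ℕ} {p q : Fin m × Fin n} (h : LexLt p q) :
    (p.1 : ℕ) * n + p.2 < (q.1 : ℕ) * n + q.2 := by
  rcases h with h | ⟨h1, h2⟩
  · have h2 : (p.2 : ℕ) < n := p.2.isLt
    have h3 : (p.1 : ℕ) + 1 ≤ (q.1 : ℕ) := h
    have h4 : ((p.1 : ℕ) + 1) * n ≤ (q.1 : ℕ) * n := Nat.mul_le_mul_right n h3
    have h5 : ((p.1 : ℕ) + 1) * n = (p.1 : ℕ) * n + n := by ring
    omega
  · have h1' : (p.1 : ℕ) = (q.1 : ℕ) := congrArg Fin.val h1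
    have h2' : (p.2 : ℕ) < (q.2 : ℕ) := h2
    rw [h1']
    omega

end Helpers

lemma numer1 {e Nr : ℝ} (he : 0 < e) (hNr : 1 ≤ Nr) :
    6*Nr*(e/(12*Nr*(1+e))) ≤ e * (1 - 6*Nr*(e/(12*Nr*(1+e)))) := by
  have hN0 : (0:ℝ) < Nr := by linarith
  have h1 : 6*Nr*(e/(12*Nr*(1+e))) = e/(2*(1+e)) := by
    field_simp
    ring
  rw [h1, div_le_iff₀ (by positivity)]
  have h2 : e * (1 - e / (2 * (1 + e))) * (2 * (1 + e)) = e * (2*(1+e)) - e*e := by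
    field_simp
  rw [h2]
  nlinarith

lemma numer2 {e Nr : ℝ} (he : 0 < e) (hNr : 1 ≤ Nr) :
    6*Nr*(e/(12*Nr*(1+e))) ≤ 1/2 := by
  have hN0 : (0:ℝ) < Nr := by linarith
  have h1 : 6*Nr*(e/(12*Nr*(1+e))) = e/(2*(1+e)) := by
    field_simp
    ring
  rw [h1, div_le_div_iff₀ (by positivity) (by norm_num)]
  nlinarith

set_option maxHeartbeats 2000000 in
lemma main_aux {X : Type*} [NormedAddCommGroup X] [NormedSpace ℝ X]
    (n m : ℕ) (hm : 0 < m) (hn : 0 < n) (ε : ℝ) (hε : 0 < ε)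
    (x : Fin n → ℕ → X) (hnorm : ∀ j i, ‖x j i‖ = 1)
    (hwn : ∀ j (f : X →L[ℝ] ℝ), Tendsto (fun i => f (x j i)) atTop (nhds 0)) :
    ∃ T : Set ℕ, T.Infinite ∧ ∀ κ : Fin m × Fin n → ℕ, (∀ p, κ p ∈ T) →
        (∀ p q : Fin m × Fin n, LexLt p q → κ p < κ q) →
        ∀ (a : Fin m × Fin n → ℝ) (F : Finset (Fin m × Fin n)),
          ‖∑ p ∈ Finset.univ \ F, a p • x p.2 (κ p)‖ ≤ (1 + ε) * ‖Sfun x a κ‖ := by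
  classical
  set N : ℕ := m * n with hNdef
  have hN0 : 0 < N := Nat.mul_pos hm hn
  have hNr : (1 : ℝ) ≤ (N : ℝ) := by exact_mod_cast hN0
  have hNr0 : (0 : ℝ) < (N : ℝ) := by linarith
  set δ : ℝ := ε / (12 * N * (1 + ε)) with hδdef
  have hδ : 0 < δ := by
    apply div_pos hε
    positivity
  have hδ1 : δ ≤ 1 := by
    rw [hδdef, div_le_one (by positivity)]
    nlinarith
  -- the grid
  set Kc : ℤ := ⌈1/δ⌉ with hKc
  have hKc1 : (1 : ℤ) ≤ Kc := by
    rw [hKc]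
    exact_mod_cast Int.ceil_pos.mpr (by positivity)
  set grid : Finset ℝ := (Finset.Icc (-Kc) Kc).image (fun z : ℤ => (z:ℝ) * δ) with hgriddef
  have hgrid0 : (0:ℝ) ∈ grid := by
    refine Finset.mem_image.mpr ⟨0, ?_, by simp⟩
    rw [Finset.mem_Icc]
    omega
  have hgridbd : ∀ g ∈ grid, |g| ≤ 2 := by
    intro g hg
    obtain ⟨z, hz, rfl⟩ := Finset.mem_image.mp hg
    rw [Finset.mem_Icc] at hz
    have h1 : |(z:ℝ)| ≤ (Kc:ℝ) := by
      rw [abs_le]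
      constructor
      · exact_mod_cast hz.1
      · exact_mod_cast hz.2
    have h2 : (Kc:ℝ) ≤ 1/δ + 1 := by
      rw [hKc]
      exact le_of_lt (Int.ceil_lt_add_one _)
    calc |(z:ℝ) * δ| = |(z:ℝ)| * δ := by rw [abs_mul, abs_of_pos hδ]
      _ ≤ (1/δ + 1)*δ := mul_le_mul_of_nonneg_right (h1.trans h2) hδ.le
      _ = 1 + δ := by field_simp
      _ ≤ 2 := by linarith
  have hgridnet : ∀ r : ℝ, |r| ≤ 1 → ∃ g ∈ grid, |r - g| ≤ δ := by
    intro r hr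
    rw [abs_le] at hr
    refine ⟨(⌊r/δ⌋ : ℝ) * δ, ?_, ?_⟩
    · refine Finset.mem_image.mpr ⟨⌊r/δ⌋, Finset.mem_Icc.mpr ⟨?_, ?_⟩, rfl⟩
      · have h1 : (-1 : ℝ)/δ ≤ r/δ := (div_le_div_iff_of_pos_right hδ).mpr hr.1
        have h2 : ⌊(-1 : ℝ)/δ⌋ ≤ ⌊r/δ⌋ := Int.floor_le_floor h1
        have h3 : ⌊(-1 : ℝ)/δ⌋ = -⌈(1:ℝ)/δ⌉ := by
          rw [neg_div, Int.floor_neg]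
        omega
      · have h1 : r/δ ≤ 1/δ := (div_le_div_iff_of_pos_right hδ).mpr hr.2
        calc ⌊r/δ⌋ ≤ ⌈r/δ⌉ := Int.floor_le_ceil _
          _ ≤ ⌈(1:ℝ)/δ⌉ := Int.ceil_le_ceil h1
          _ = Kc := rfl
    · have h1 : (⌊r/δ⌋:ℝ) ≤ r/δ := Int.floor_le _
      have h2 : r/δ < ⌊r/δ⌋ + 1 := Int.lt_floor_add_one _
      have e1 : r = (r/δ) * δ := by field_simp
      rw [abs_le]
      constructor
      · nlinarith
      · nlinarith
  -- the finite set of grid coefficient vectors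
  set D : Finset ((Fin m × Fin n) → ℝ) := Fintype.piFinset (fun _ => grid) with hDdef
  have hDmem : ∀ a ∈ D, ∀ p, a p ∈ grid := fun a ha p => (Fintype.mem_piFinset.mp ha) p
  have hDbd : ∀ a ∈ D, ∀ p, |a p| ≤ 2 := fun a ha p => hgridbd _ (hDmem a ha p)
  -- norm bound
  have hcard : (Finset.univ : Finset (Fin m × Fin n)).card = N := by
    simp [Finset.card_univ, hNdef, Nat.mul_comm]
  have hSbd : ∀ a : (Fin m × Fin n) → ℝ, (∀ p, |a p| ≤ 2) → ∀ κ, ‖Sfun x a κ‖ ≤ 2*N := by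
    intro a ha κ
    calc ‖Sfun x a κ‖ ≤ ∑ p, ‖a p • x p.2 (κ p)‖ := norm_sum_le _ _
      _ = ∑ p, |a p| := by
          apply Finset.sum_congr rfl
          intro p _
          rw [norm_smul, hnorm, Real.norm_eq_abs, mul_one]
      _ ≤ ∑ _p : Fin m × Fin n, (2:ℝ) := Finset.sum_le_sum (fun p _ => ha p)
      _ = 2*N := by
          rw [Finset.sum_const, hcard, nsmul_eq_mul, mul_comm]
  -- the coloring and Ramsey
  set FB : ℕ := ⌊2*(N:ℝ)/δ⌋₊ with hFBdef
  set colf : (Fin N → ℕ) → ({a // a ∈ D} → Fin (FB+1)) := fun g a =>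
    ⟨min ⌊‖Sfun x a.1 (fun p => g ⟨(p.1 : ℕ) * n + p.2, idx_lt p⟩)‖/δ⌋₊ FB,
      Nat.lt_succ_of_le (min_le_right _ _)⟩ with hcolfdef
  obtain ⟨T, _hTsub, hTinf, k₀, hmono⟩ := ramseyTuples N colf Set.univ Set.infinite_univ
  -- admissibility and stabilization
  have hflle : ∀ a ∈ D, ∀ κ, ⌊‖Sfun x a κ‖/δ⌋₊ ≤ FB := by
    intro a ha κ
    exact Nat.floor_le_floor ((div_le_div_iff_of_pos_right hδ).mpr (hSbd a (hDbd a ha) κ))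
  have hstab : ∀ a ∈ D, ∀ κ κ' : (Fin m × Fin n) → ℕ,
      (∀ p q, LexLt p q → κ p < κ q) → (∀ p q, LexLt p q → κ' p < κ' q) →
      (∀ p, κ p ∈ T) → (∀ p, κ' p ∈ T) →
      |‖Sfun x a κ‖ - ‖Sfun x a κ'‖| ≤ δ := by
    intro a ha κ κ' hκ hκ' hκT hκ'T
    have hψ : ∀ (μ : (Fin m × Fin n) → ℕ), (∀ p q, LexLt p q → μ p < μ q) →
        StrictMono (fun s : Fin N => μ (psiFun m n hn s)) := by
      intro μ hμ s s' hss'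
      apply hμ
      apply psi_lex hn
      simp only [Fin.lt_def]
      exact hss'
    have hcomp : ∀ (μ : (Fin m × Fin n) → ℕ), (fun p : Fin m × Fin n =>
        (fun s : Fin N => μ (psiFun m n hn s)) ⟨(p.1 : ℕ) * n + p.2, idx_lt p⟩)
        = μ := by
      intro μ
      funext p
      simp only []
      rw [psi_idx hn]
    have e1 := hmono _ (hψ κ hκ) (fun s => hκT _)
    have e2 := hmono _ (hψ κ' hκ') (fun s => hκ'T _)
    have e3 : colf (fun s : Fin N => κ (psiFun m n hn s)) ⟨a, ha⟩
        = colf (fun s : Fin N => κ' (psiFun m n hn s)) ⟨a, ha⟩ := by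
      rw [e1, e2]
    simp only [hcolfdef, hcomp κ, hcomp κ'] at e3
    have e4 : min ⌊‖Sfun x a κ‖/δ⌋₊ FB = min ⌊‖Sfun x a κ'‖/δ⌋₊ FB := congrArg Fin.val e3
    rw [min_eq_left (hflle a ha κ), min_eq_left (hflle a ha κ')] at e4
    exact floor_bin hδ (norm_nonneg _) (norm_nonneg _) e4
  -- single-coordinate removal
  have hrem : ∀ a ∈ D, ∀ κ : (Fin m × Fin n) → ℕ, (∀ p q, LexLt p q → κ p < κ q) →
      (∀ p, κ p ∈ T) → ∀ t : Fin m × Fin n,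
      ‖Sfun x (Function.update a t 0) κ‖ ≤ ‖Sfun x a κ‖ + 4*δ := by
    intro a ha κ hκ hκT t
    haveI : Infinite T := Set.infinite_coe_iff.mpr hTinf
    set f : ℕ → ℕ := ⇑(Nat.orderEmbeddingOfSet T) with hfdef
    have hf : StrictMono f := (Nat.orderEmbeddingOfSet T).strictMono
    have hfT : ∀ i, f i ∈ T := by
      intro i
      have : f i ∈ Set.range (Nat.orderEmbeddingOfSet T) := Set.mem_range_self i
      rwa [Nat.orderEmbeddingOfSet_range] at this
    set s₀ : ℕ := (t.1 : ℕ) * n + t.2 with hs₀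
    -- Mazur
    have hS'inf : (T ∩ Set.Ioi (f s₀)).Infinite := by
      have he : T ∩ Set.Ioi (f s₀) = T \ Set.Iic (f s₀) := by
        ext b
        simp [Set.mem_Ioi, Set.mem_Iic, not_le]
      rw [he]
      exact hTinf.diff (Set.finite_Iic _)
    obtain ⟨M, pdx, w, hpS, hw0, hw1, hcv⟩ := mazur_conv (hwn t.2) hS'inf hδ
    have hM0 : 0 < M := by
      rcases Nat.eq_zero_or_pos M with h | h
      · subst h
        simp at hw1
      · exact h
    set Mx : ℕ := Finset.univ.sup pdx with hMx
    have hpMx : ∀ r, pdx r ≤ Mx := fun r => Finset.le_sup (Finset.mem_univ r)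
    set B : ℕ := Mx + 1 with hB
    have hfB : Mx < f B := lt_of_lt_of_le (Nat.lt_succ_self Mx) hf.le_apply
    -- the competitor tuples
    set κf : ℕ → (Fin m × Fin n) → ℕ := fun v p =>
      if (p.1 : ℕ) * n + p.2 < s₀ then f ((p.1 : ℕ) * n + p.2)
      else if p = t then v else f (B + ((p.1 : ℕ) * n + p.2)) with hκfdef
    have hκfoff : ∀ v v' p, p ≠ t → κf v p = κf v' p := by
      intro v v' p hp
      simp only [hκfdef]
      by_cases h : (p.1 : ℕ) * n + p.2 < s₀ <;> simp [h, hp]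
    have hκft : ∀ v, κf v t = v := by
      intro v
      simp [hκfdef, hs₀]
    have hκfT : ∀ v, v ∈ T → ∀ p, κf v p ∈ T := by
      intro v hv p
      simp only [hκfdef]
      split_ifs <;> first | exact hfT _ | exact hv
    have hκfAdm : ∀ v, f s₀ < v → v < f B → ∀ p q, LexLt p q → κf v p < κf v q := by
      intro v hv1 hv2 p q hpq
      have hφ : (p.1 : ℕ) * n + p.2 < (q.1 : ℕ) * n + q.2 := idx_mono hpq
      simp only [hκfdef]
      by_cases h1 : (p.1 : ℕ) * n + p.2 < s₀
      · by_cases h2 : (q.1 : ℕ) * n + q.2 < s₀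
        · rw [if_pos h1, if_pos h2]
          exact hf hφ
        · by_cases h3 : q = t
          · subst h3
            rw [if_pos h1, if_neg h2, if_pos rfl]
            exact (hf h1).trans hv1
          · rw [if_pos h1, if_neg h2, if_neg h3]
            exact hf (hφ.trans_le (Nat.le_add_left _ B))
      · by_cases h2 : p = t
        · subst h2
          have hq1 : ¬ ((q.1 : ℕ) * n + q.2 < s₀) := by omega
          have hq2 : q ≠ p := by
            intro hqt
            subst hqt
            exact lt_irrefl _ hφ
          rw [if_neg h1, if_pos rfl, if_neg hq1, if_neg hq2]
          calc v < f B := hv2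
            _ ≤ f (B + ((q.1 : ℕ) * n + q.2)) := hf.monotone (Nat.le_add_right _ _)
        · have hq1 : ¬ ((q.1 : ℕ) * n + q.2 < s₀) := by omega
          have hq2 : q ≠ t := by
            intro hqt
            subst hqt
            omega
          rw [if_neg h1, if_neg h2, if_neg hq1, if_neg hq2]
          exact hf (Nat.add_lt_add_left hφ B)
    -- per-r data
    have hvT : ∀ r, pdx r ∈ T := fun r => (hpS r).1
    have hvlo : ∀ r, f s₀ < pdx r := fun r => (hpS r).2
    have hvhi : ∀ r, pdx r < f B := fun r => lt_of_le_of_lt (hpMx r) hfB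
    set r₀ : Fin M := ⟨0, hM0⟩ with hr₀
    set v₀ : ℕ := pdx r₀ with hv₀
    set u' : X := ∑ p ∈ Finset.univ \ {t}, a p • x p.2 (κf v₀ p) with hu'
    have hsplit : ∀ v, Sfun x a (κf v) = u' + a t • x t.2 v := by
      intro v
      show (∑ p, a p • x p.2 (κf v p)) = _
      rw [Finset.sum_eq_sum_sdiff_singleton_add (Finset.mem_univ t)]
      congr 1
      · apply Finset.sum_congr rfl
        intro p hp
        have hpt : p ≠ t := by
          rw [Finset.mem_sdiff, Finset.mem_singleton] at hp
          exact hp.2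
        rw [hκfoff v v₀ p hpt]
      · rw [hκft]
    have ht1 : Sfun x (Function.update a t 0) (κf v₀) = u' := by
      show (∑ p, Function.update a t 0 p • x p.2 (κf v₀ p)) = _
      rw [Finset.sum_eq_sum_sdiff_singleton_add (Finset.mem_univ t)]
      rw [Function.update_self, zero_smul, add_zero]
      apply Finset.sum_congr rfl
      intro p hp
      have hpt : p ≠ t := by
        rw [Finset.mem_sdiff, Finset.mem_singleton] at hp
        exact hp.2
      rw [Function.update_of_ne hpt]
    have hua : Function.update a t 0 ∈ D := by
      rw [hDdef]
      refine Fintype.mem_piFinset.mpr (fun p => ?_)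
      by_cases hp : p = t
      · subst hp
        rw [Function.update_self]
        exact hgrid0
      · rw [Function.update_of_ne hp]
        exact hDmem a ha p
    set cvec : X := ∑ r, w r • x t.2 (pdx r) with hcvec
    have c1 : ‖Sfun x (Function.update a t 0) κ‖
        ≤ ‖Sfun x (Function.update a t 0) (κf v₀)‖ + δ := by
      have h := hstab _ hua κ (κf v₀) hκ
        (hκfAdm v₀ (hvlo r₀) (hvhi r₀)) hκT (hκfT v₀ (hvT r₀))
      have h2 := le_abs_self (‖Sfun x (Function.update a t 0) κ‖
        - ‖Sfun x (Function.update a t 0) (κf v₀)‖)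
      linarith
    have e5 : u' + a t • cvec = ∑ r, w r • Sfun x a (κf (pdx r)) := by
      have : ∀ r : Fin M, w r • Sfun x a (κf (pdx r))
          = w r • u' + a t • (w r • x t.2 (pdx r)) := by
        intro r
        rw [hsplit, smul_add]
        congr 1
        rw [smul_comm]
      rw [Finset.sum_congr rfl (fun r _ => this r)]
      rw [Finset.sum_add_distrib, ← Finset.sum_smul, hw1, one_smul]
      congr 1
      rw [← Finset.smul_sum]
    have c2 : ‖u' + a t • cvec‖ ≤ ‖Sfun x a κ‖ + δ := by
      rw [e5]
      calc ‖∑ r, w r • Sfun x a (κf (pdx r))‖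
          ≤ ∑ r, ‖w r • Sfun x a (κf (pdx r))‖ := norm_sum_le _ _
        _ = ∑ r, w r * ‖Sfun x a (κf (pdx r))‖ := by
            apply Finset.sum_congr rfl
            intro r _
            rw [norm_smul, Real.norm_eq_abs, abs_of_nonneg (hw0 r)]
        _ ≤ ∑ r, w r * (‖Sfun x a κ‖ + δ) := by
            apply Finset.sum_le_sum
            intro r _
            apply mul_le_mul_of_nonneg_left ?_ (hw0 r)
            have h := hstab _ ha (κf (pdx r)) κ
              (hκfAdm _ (hvlo r) (hvhi r)) hκ (hκfT _ (hvT r)) hκT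
            have h2 := le_abs_self (‖Sfun x a (κf (pdx r))‖ - ‖Sfun x a κ‖)
            linarith
        _ = (∑ r, w r) * (‖Sfun x a κ‖ + δ) := by rw [← Finset.sum_mul]
        _ = ‖Sfun x a κ‖ + δ := by rw [hw1, one_mul]
    have c3 : ‖u'‖ ≤ ‖u' + a t • cvec‖ + 2*δ := by
      have hcs : ‖a t • cvec‖ ≤ 2*δ := by
        rw [norm_smul, Real.norm_eq_abs]
        exact mul_le_mul (hDbd a ha t) hcv.le (norm_nonneg _) (by norm_num)
      calc ‖u'‖ = ‖(u' + a t • cvec) - a t • cvec‖ := by rw [add_sub_cancel_right]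
        _ ≤ ‖u' + a t • cvec‖ + ‖a t • cvec‖ := norm_sub_le _ _
        _ ≤ ‖u' + a t • cvec‖ + 2*δ := by linarith
    rw [ht1] at c1
    linarith
  -- iterated removal
  have hz0 : ∀ a : (Fin m × Fin n) → ℝ, zeroOn ∅ a = a := by
    intro a
    funext p
    simp [zeroOn]
  have hzD : ∀ a ∈ D, ∀ G : Finset (Fin m × Fin n), zeroOn G a ∈ D := by
    intro a ha G
    rw [hDdef]
    refine Fintype.mem_piFinset.mpr (fun p => ?_)
    by_cases hp : p ∈ G
    · simp only [zeroOn, hp, if_true]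
      exact hgrid0
    · simp only [zeroOn, hp, if_false]
      exact hDmem a ha p
  have hremF : ∀ F : Finset (Fin m × Fin n), ∀ a ∈ D, ∀ κ : (Fin m × Fin n) → ℕ,
      (∀ p q, LexLt p q → κ p < κ q) → (∀ p, κ p ∈ T) →
      ‖Sfun x (zeroOn F a) κ‖ ≤ ‖Sfun x a κ‖ + 4*δ*F.card := by
    intro F
    induction F using Finset.induction_on with
    | empty =>
      intro a ha κ h1 h2
      rw [hz0 a]
      simp
    | @insert t F hni ih =>
      intro a ha κ h1 h2
      have hzz : zeroOn (insert t F) a = Function.update (zeroOn F a) t 0 := by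
        funext p
        by_cases hp : p = t
        · subst hp
          simp [zeroOn, Function.update_self]
        · simp [zeroOn, Function.update_of_ne hp, Finset.mem_insert, hp]
      rw [hzz]
      calc ‖Sfun x (Function.update (zeroOn F a) t 0) κ‖
          ≤ ‖Sfun x (zeroOn F a) κ‖ + 4*δ := hrem _ (hzD a ha F) κ h1 h2 t
        _ ≤ ‖Sfun x a κ‖ + 4*δ*F.card + 4*δ := by linarith [ih a ha κ h1 h2]
        _ = ‖Sfun x a κ‖ + 4*δ*((insert t F).card : ℝ) := by
            rw [Finset.card_insert_of_notMem hni]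
            push_cast
            ring
  -- transfer to arbitrary coefficients in the unit ball
  have hnet : ∀ a : (Fin m × Fin n) → ℝ, (∀ p, |a p| ≤ 1) → ∀ κ : (Fin m × Fin n) → ℕ,
      (∀ p q, LexLt p q → κ p < κ q) → (∀ p, κ p ∈ T) → ∀ F : Finset (Fin m × Fin n),
      ‖Sfun x (zeroOn F a) κ‖ ≤ ‖Sfun x a κ‖ + 6*N*δ := by
    intro a ha κ h1 h2 F
    choose a' ha'g ha'c using fun p => hgridnet (a p) (ha p)
    have ha'D : a' ∈ D := by
      rw [hDdef]
      exact Fintype.mem_piFinset.mpr ha'g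
    have hdiff : ∀ G : Finset (Fin m × Fin n),
        ‖Sfun x (zeroOn G a) κ - Sfun x (zeroOn G a') κ‖ ≤ N*δ := by
      intro G
      have e : Sfun x (zeroOn G a) κ - Sfun x (zeroOn G a') κ
          = ∑ p, (zeroOn G a p - zeroOn G a' p) • x p.2 (κ p) := by
        show (∑ p, zeroOn G a p • x p.2 (κ p)) - (∑ p, zeroOn G a' p • x p.2 (κ p)) = _
        rw [← Finset.sum_sub_distrib]
        apply Finset.sum_congr rfl
        intro p _
        rw [sub_smul]
      rw [e]
      calc ‖∑ p, (zeroOn G a p - zeroOn G a' p) • x p.2 (κ p)‖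
          ≤ ∑ p, ‖(zeroOn G a p - zeroOn G a' p) • x p.2 (κ p)‖ := norm_sum_le _ _
        _ = ∑ p, |zeroOn G a p - zeroOn G a' p| := by
            apply Finset.sum_congr rfl
            intro p _
            rw [norm_smul, hnorm, Real.norm_eq_abs, mul_one]
        _ ≤ ∑ _p : Fin m × Fin n, δ := by
            apply Finset.sum_le_sum
            intro p _
            by_cases hp : p ∈ G
            · simp [zeroOn, hp, hδ.le]
            · simp only [zeroOn, hp, if_false]
              exact ha'c p
        _ = N*δ := by
            rw [Finset.sum_const, hcard, nsmul_eq_mul]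
    have hFcard : (F.card : ℝ) ≤ N := by
      exact_mod_cast (Finset.card_le_univ F).trans_eq hcard
    have d1 := hdiff F
    have d2 := hdiff ∅
    rw [hz0 a, hz0 a'] at d2
    have n1 := norm_sub_norm_le (Sfun x (zeroOn F a) κ) (Sfun x (zeroOn F a') κ)
    have n2 := norm_sub_norm_le (Sfun x a' κ) (Sfun x a κ)
    rw [norm_sub_rev] at n2
    have h3 := hremF F a' ha'D κ h1 h2
    have h4 : 4*δ*(F.card : ℝ) ≤ 4*δ*N := by
      apply mul_le_mul_of_nonneg_left hFcard
      positivity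
    have hδN : (0:ℝ) ≤ N*δ := by positivity
    nlinarith [d1, d2, n1, n2, h3, h4]
  -- the lower bound
  have hlow : ∀ a : (Fin m × Fin n) → ℝ, (∀ p, |a p| ≤ 1) → ∀ t, |a t| = 1 →
      ∀ κ : (Fin m × Fin n) → ℕ, (∀ p q, LexLt p q → κ p < κ q) → (∀ p, κ p ∈ T) →
      1 ≤ ‖Sfun x a κ‖ + 6*N*δ := by
    intro a ha t hat κ h1 h2
    have h := hnet a ha κ h1 h2 (Finset.univ \ {t})
    have e : Sfun x (zeroOn (Finset.univ \ {t}) a) κ = a t • x t.2 (κ t) := by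
      show (∑ p, zeroOn (Finset.univ \ {t}) a p • x p.2 (κ p)) = _
      rw [Fintype.sum_eq_single t]
      · simp [zeroOn]
      · intro p hp
        have : p ∈ Finset.univ \ {t} := by
          rw [Finset.mem_sdiff, Finset.mem_singleton]
          exact ⟨Finset.mem_univ p, hp⟩
        simp [zeroOn, this]
    rw [e, norm_smul, hnorm, Real.norm_eq_abs, mul_one, hat] at h
    linarith
  -- numerics
  have hη : 6*N*δ ≤ ε * (1 - 6*N*δ) := by
    rw [hδdef]
    exact numer1 hε hNr
  have hη' : 6*(N:ℝ)*δ ≤ 1/2 := by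
    rw [hδdef]
    exact numer2 hε hNr
  -- the key inequality
  refine ⟨T, hTinf, ?_⟩
  intro κ hκT hκ a F
  have hzsum : ∀ b : (Fin m × Fin n) → ℝ,
      (∑ p ∈ Finset.univ \ F, b p • x p.2 (κ p)) = Sfun x (zeroOn F b) κ := by
    intro b
    show _ = (∑ p, zeroOn F b p • x p.2 (κ p))
    rw [Finset.sdiff_eq_filter, Finset.sum_filter]
    apply Finset.sum_congr rfl
    intro p _
    by_cases hp : p ∈ F
    · simp [zeroOn, hp]
    · simp [zeroOn, hp]
  obtain ⟨t, _, hmax⟩ := Finset.exists_max_image Finset.univ (fun p => |a p|)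
    ⟨(⟨0, hm⟩, ⟨0, hn⟩), Finset.mem_univ _⟩
  by_cases h0 : a t = 0
  · have hz : ∀ p, a p = 0 := by
      intro p
      have := hmax p (Finset.mem_univ p)
      rw [h0] at this
      simpa using (abs_nonpos_iff.mp (by simpa using this))
    have e1 : (∑ p ∈ Finset.univ \ F, a p • x p.2 (κ p)) = 0 := by
      apply Finset.sum_eq_zero
      intro p _
      rw [hz p, zero_smul]
    rw [e1, norm_zero]
    positivity
  · set c : ℝ := |a t| with hc
    have hcpos : 0 < c := abs_pos.mpr h0
    set b : (Fin m × Fin n) → ℝ := fun p => c⁻¹ * a p with hb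
    have hb1 : ∀ p, |b p| ≤ 1 := by
      intro p
      rw [hb]
      simp only []
      rw [abs_mul, abs_inv, abs_abs]
      calc c⁻¹ * |a p| ≤ c⁻¹ * c := by
            apply mul_le_mul_of_nonneg_left (hmax p (Finset.mem_univ p))
            exact inv_nonneg.mpr hcpos.le
        _ = 1 := inv_mul_cancel₀ hcpos.ne'
    have hbt : |b t| = 1 := by
      rw [hb]
      simp only []
      rw [abs_mul, abs_inv, abs_abs, ← hc, inv_mul_cancel₀ hcpos.ne']
    have hsc : ∀ G : Finset (Fin m × Fin n),
        (∑ p ∈ G, a p • x p.2 (κ p)) = c • ∑ p ∈ G, b p • x p.2 (κ p) := by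
      intro G
      rw [Finset.smul_sum]
      apply Finset.sum_congr rfl
      intro p _
      rw [smul_smul]
      congr 1
      rw [hb]
      simp only []
      rw [← mul_assoc, mul_inv_cancel₀ hcpos.ne', one_mul]
    have hSab : ‖Sfun x a κ‖ = c * ‖Sfun x b κ‖ := by
      show ‖∑ p, a p • x p.2 (κ p)‖ = _
      rw [hsc Finset.univ]
      rw [norm_smul, Real.norm_eq_abs, abs_abs]
      rfl
    have hlowb := hlow b hb1 t hbt κ hκ hκT
    have hnetb := hnet b hb1 κ hκ hκT F
    have hmain : ‖Sfun x (zeroOn F b) κ‖ ≤ (1+ε) * ‖Sfun x b κ‖ := by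
      have h5 : ε * (1 - 6*N*δ) ≤ ε * ‖Sfun x b κ‖ := by
        apply mul_le_mul_of_nonneg_left ?_ hε.le
        linarith
      nlinarith
    calc ‖∑ p ∈ Finset.univ \ F, a p • x p.2 (κ p)‖
        = c * ‖∑ p ∈ Finset.univ \ F, b p • x p.2 (κ p)‖ := by
          rw [hsc, norm_smul, Real.norm_eq_abs, abs_abs]
      _ = c * ‖Sfun x (zeroOn F b) κ‖ := by rw [hzsum b]
      _ ≤ c * ((1+ε) * ‖Sfun x b κ‖) := mul_le_mul_of_nonneg_left hmain hcpos.le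
      _ = (1+ε) * (c * ‖Sfun x b κ‖) := by ring
      _ = (1+ε) * ‖Sfun x a κ‖ := by rw [← hSab]




/-- **Lemma 3.5.** For normalized weakly null sequences `(x^{(1)}_i), …, (x^{(n)}_i)`
and `ε > 0` there is an infinite `L ⊆ ℕ` such that every interleaved family
`(x^{(j)}_{k^{(j)}_i})_{i≤m, j≤n}` with indices in `L` is a suppression
`(1+ε)`-unconditional basic sequence. -/

theorem statement7 {X : Type*} [NormedAddCommGroup X] [NormedSpace ℝ X]
    (n m : ℕ) (ε : ℝ) (hε : 0 < ε)
    (x : Fin n → ℕ → X) (hnorm : ∀ j, IsNormalizedSeq (x j))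
    (hwn : ∀ j, IsWeaklyNull (x j)) :
    ∃ L : Set ℕ, L.Infinite ∧
      ∀ k : Fin m → Fin n → ℕ,
        (∀ i j, k i j ∈ L) →
        (∀ (i i' : Fin m) (j j' : Fin n),
          (i < i' ∨ (i = i' ∧ j < j')) → k i j < k i' j') →
        LinearIndependent ℝ (fun p : Fin m × Fin n => x p.2 (k p.1 p.2)) ∧
        ∀ (a : Fin m → Fin n → ℝ) (F : Finset (Fin m × Fin n)),
          ‖∑ p ∈ Finset.univ \ F, a p.1 p.2 • x p.2 (k p.1 p.2)‖ ≤
            (1 + ε) * ‖∑ p : Fin m × Fin n, a p.1 p.2 • x p.2 (k p.1 p.2)‖ := by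
  have htriv : (m = 0 ∨ n = 0) → _root_.IsEmpty (Fin m × Fin n) := by
    rintro (h | h) <;> subst h
    · exact ⟨fun p => p.1.elim0⟩
    · exact ⟨fun p => p.2.elim0⟩
  by_cases hmn : m = 0 ∨ n = 0
  · haveI := htriv hmn
    refine ⟨Set.univ, Set.infinite_univ, fun k _ _ => ⟨linearIndependent_empty_type, ?_⟩⟩
    intro a F
    have h2 : ∀ (G : Finset (Fin m × Fin n)),
        (∑ p ∈ G, a p.1 p.2 • x p.2 (k p.1 p.2)) = 0 :=
      fun G => Finset.sum_eq_zero (fun p _ => absurd trivial (IsEmpty.elim ‹_› p))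
    rw [h2, h2]
    simp
  · push_neg at hmn
    have hm : 0 < m := Nat.pos_of_ne_zero hmn.1
    have hn : 0 < n := Nat.pos_of_ne_zero hmn.2
    obtain ⟨T, hTinf, hT⟩ := main_aux n m hm hn ε hε x
      (fun j i => hnorm j i) (fun j f => hwn j f)
    refine ⟨T, hTinf, ?_⟩
    intro k hkT hkord
    have hAdm : ∀ p q : Fin m × Fin n, LexLt p q → k p.1 p.2 < k q.1 q.2 :=
      fun p q h => hkord p.1 q.1 p.2 q.2 h
    have hmem : ∀ p : Fin m × Fin n, k p.1 p.2 ∈ T := fun p => hkT p.1 p.2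
    have KEY := hT (fun p => k p.1 p.2) hmem hAdm
    constructor
    · rw [Fintype.linearIndependent_iff]
      intro g hg p₀
      have h := KEY g (Finset.univ \ {p₀})
      have e : Finset.univ \ (Finset.univ \ {p₀}) = ({p₀} : Finset (Fin m × Fin n)) := by
        simp [Finset.sdiff_sdiff_self_left]
      rw [e, Finset.sum_singleton] at h
      have hS0 : Sfun x g (fun p => k p.1 p.2) = 0 := hg
      rw [hS0, norm_zero, mul_zero] at h
      have e2 : ‖g p₀ • x p₀.2 (k p₀.1 p₀.2)‖ = |g p₀| := by
        rw [norm_smul, hnorm p₀.2, Real.norm_eq_abs, mul_one]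
      rw [e2] at h
      exact abs_nonpos_iff.mp h
    · intro a F
      exact KEY (fun p => a p.1 p.2) F

end
end
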